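/- arXiv:2005.09798 — 2 statements merged into one kernel-verified Lean document; each statement's English description precedes it below -/
import Mathlib

section
/- If a finite group G is not DRR-detecting, then there is a Cayley digraph on G witnessing that G is not DRR-detecting which is weakly connected and prime with respect to cartesian product. Similarly, if G is not GRR-detecting, then there is a Cayley graph on G witnessing that G is not GRR-detecting which is connected and prime with respect to cartesian product. -/
/-! Common definitions: Cayley digraphs, digraph automorphism groups,
DRRs/GRRs, detecting groups, the regular representation, the group `W(G,N)`,
wreath and cartesian products of digraphs, and the wreath product of groups. -/

universe u

/-- The adjacency relation of the Cayley digraph `Cay(G,S)`: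
there is a directed edge from `g₁` to `g₂` iff `g₂ = s * g₁` for some `s ∈ S`. -/
def cayAdj {G : Type*} [Group G] (S : Set G) : G → G → Prop :=
  fun g₁ g₂ => ∃ s ∈ S, g₂ = s * g₁

/-- The automorphism group of a digraph (given by its adjacency relation),
as a subgroup of the symmetric group on the vertices. -/
def digraphAut {V : Type*} (Adj : V → V → Prop) : Subgroup (Equiv.Perm V) where
  carrier := {σ | ∀ x y, Adj (σ x) (σ y) ↔ Adj x y}
  one_mem' := fun _ _ => Iff.rfl
  mul_mem' := by
    intro σ τ hσ hτ x y
    simp only [Equiv.Perm.mul_apply]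
    exact (hσ _ _).trans (hτ _ _)
  inv_mem' := by
    intro σ hσ x y
    have h := (hσ (σ⁻¹ x) (σ⁻¹ y)).symm
    simpa using h

/-- A digraph is a DRR (digraphical regular representation) of the group `G` if its
automorphism group is isomorphic to `G` and acts regularly on the vertex set. -/
def IsDRR (G : Type*) [Group G] {V : Type*} (Adj : V → V → Prop) : Prop :=
  Nonempty (digraphAut Adj ≃* G) ∧
    ∀ v w : V, ∃! σ : digraphAut Adj, (σ : Equiv.Perm V) v = w

/-- A GRR (graphical regular representation) of `G` is a DRR that is a graph. -/
def IsGRR (G : Type*) [Group G] {V : Type*} (Adj : V → V → Prop) : Prop :=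
  Symmetric Adj ∧ IsDRR G Adj

/-- `Aut(G,S)` is trivial: the only group automorphism `φ` of `G` with `φ(S) = S`
is the identity. -/
def AutGSTrivial {G : Type*} [Group G] (S : Set G) : Prop :=
  ∀ φ : MulAut G, ⇑φ '' S = S → φ = 1

/-- `G` is DRR-detecting: for every `S ⊆ G`, if `Aut(G,S) = 1` then
`Cay(G,S)` is a DRR of `G`. -/
def DRRDetecting (G : Type*) [Group G] : Prop :=
  ∀ S : Set G, AutGSTrivial S → IsDRR G (cayAdj S)

/-- `G` is GRR-detecting: for every inverse-closed `S ⊆ G`, if `Aut(G,S) = 1` then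
`Cay(G,S)` is a GRR of `G`. -/
def GRRDetecting (G : Type*) [Group G] : Prop :=
  ∀ S : Set G, (∀ s ∈ S, s⁻¹ ∈ S) → AutGSTrivial S → IsGRR G (cayAdj S)

/-- `G` admits a DRR (equivalently, some Cayley digraph of `G` is a DRR). -/
def HasDRR (G : Type*) [Group G] : Prop :=
  ∃ S : Set G, IsDRR G (cayAdj S)

/-- `G` admits a GRR (equivalently, some Cayley graph of `G` is a GRR). -/
def HasGRR (G : Type*) [Group G] : Prop :=
  ∃ S : Set G, (∀ s ∈ S, s⁻¹ ∈ S) ∧ IsGRR G (cayAdj S)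

/-- The right regular representation `Ĝ = {x ↦ x·g : g ∈ G}` of `G`,
as a subgroup of the symmetric group on `G`. -/
def regularRep (G : Type*) [Group G] : Subgroup (Equiv.Perm G) where
  carrier := {σ | ∃ g : G, ∀ x, σ x = x * g}
  one_mem' := ⟨1, fun x => (mul_one x).symm⟩
  mul_mem' := by
    rintro σ τ ⟨g, hg⟩ ⟨h, hh⟩
    exact ⟨h * g, fun x => by
      simp only [Equiv.Perm.mul_apply, hg, hh, mul_assoc]⟩
  inv_mem' := by
    rintro σ ⟨g, hg⟩
    refine ⟨g⁻¹, fun x => ?_⟩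
    have h1 : σ (x * g⁻¹) = x := by rw [hg]; group
    calc σ⁻¹ x = σ⁻¹ (σ (x * g⁻¹)) := by rw [h1]
      _ = x * g⁻¹ := by simp

/-- The set `W(G,N)` of all permutations `φ_{c,f} : x ↦ x·c·f(x̄)` of `G`,
where `c ∈ G` and `f : G/N → N`. -/
def Wset (G : Type*) [Group G] (N : Subgroup G) [N.Normal] : Set (Equiv.Perm G) :=
  {σ | ∃ (c : G) (f : G ⧸ N → G), (∀ q, f q ∈ N) ∧
      ∀ x : G, σ x = x * c * f (QuotientGroup.mk x)}

/-- The wreath product `X ≀ Y` of two digraphs. -/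
def wreathAdj {X Y : Type*} (A : X → X → Prop) (B : Y → Y → Prop) :
    X × Y → X × Y → Prop :=
  fun p q => A p.1 q.1 ∨ (p.1 = q.1 ∧ B p.2 q.2)

/-- The cartesian product `X □ Y` of two digraphs. -/
def cartAdj {X Y : Type*} (A : X → X → Prop) (B : Y → Y → Prop) :
    X × Y → X × Y → Prop :=
  fun p q => (p.1 = q.1 ∧ B p.2 q.2) ∨ (p.2 = q.2 ∧ A p.1 q.1)

/-- A digraph is prime with respect to the cartesian product if it has more than one
vertex and is not isomorphic to a cartesian product of two digraphs,
each with more than one vertex. -/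
def IsPrimeDigraph {V : Type u} (Adj : V → V → Prop) : Prop :=
  (∃ x y : V, x ≠ y) ∧
    ¬ ∃ (X Y : Type u) (A : X → X → Prop) (B : Y → Y → Prop) (e : V ≃ X × Y),
        (∃ x₁ x₂ : X, x₁ ≠ x₂) ∧ (∃ y₁ y₂ : Y, y₁ ≠ y₂) ∧
          ∀ v w : V, Adj v w ↔ cartAdj A B (e v) (e w)

/-- A digraph is weakly connected if any two vertices are joined by a path in the
underlying undirected graph. -/
def WeaklyConnected {V : Type*} (Adj : V → V → Prop) : Prop :=
  ∀ x y : V, Relation.ReflTransGen (fun a b => Adj a b ∨ Adj b a) x y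

/-- Translation of coordinates: the automorphism `v ↦ (x ↦ v (x * q))`
of the group `Q → N`. -/
def transAut {Q N : Type*} [Group Q] [Group N] (q : Q) : (Q → N) ≃* (Q → N) where
  toFun v := fun x => v (x * q)
  invFun v := fun x => v (x * q⁻¹)
  left_inv v := funext fun x => by simp [mul_assoc]
  right_inv v := funext fun x => by simp [mul_assoc]
  map_mul' v w := rfl

/-- The action of `Q` on `Q → N` by translating coordinates, as a homomorphism
`Q →* MulAut (Q → N)`. -/
def transHom (Q N : Type*) [Group Q] [Group N] : Q →* MulAut (Q → N) where
  toFun := transAut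
  map_one' := by
    ext v x
    simp [transAut]
  map_mul' q₁ q₂ := by
    ext v x
    simp [transAut, mul_assoc, MulAut.mul_apply]

/-- The wreath product `Q ≀ N` of two groups: the semidirect product
`N^Q ⋊ Q`, with `Q` acting on `N^Q` by translating the coordinates. -/
abbrev WreathProd (Q N : Type*) [Group Q] [Group N] :=
  SemidirectProduct (Q → N) Q (transHom Q N)


section L1
variable {G : Type u} [Group G]

lemma cayAdj_iff (S : Set G) (u v : G) : cayAdj S u v ↔ v * u⁻¹ ∈ S := by
  constructor
  · rintro ⟨s, hs, rfl⟩; simpa using hs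
  · intro h; exact ⟨v * u⁻¹, h, by group⟩

lemma cayAdj_compl (S : Set G) (u v : G) : cayAdj Sᶜ u v ↔ ¬ cayAdj S u v := by
  rw [cayAdj_iff, cayAdj_iff]; rfl

lemma mem_digraphAut {V : Type*} {Adj : V → V → Prop} {σ : Equiv.Perm V} :
    σ ∈ digraphAut Adj ↔ ∀ x y, Adj (σ x) (σ y) ↔ Adj x y := Iff.rfl

lemma digraphAut_compl (S : Set G) : digraphAut (cayAdj Sᶜ) = digraphAut (cayAdj S) := by
  ext σ
  simp only [mem_digraphAut, cayAdj_compl]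
  constructor
  · intro h x y; have := h x y; tauto
  · intro h x y; have := h x y; tauto

lemma isDRR_compl (S : Set G) : IsDRR G (cayAdj Sᶜ) ↔ IsDRR G (cayAdj S) := by
  unfold IsDRR
  rw [digraphAut_compl]

lemma autGSTrivial_compl {S : Set G} (h : AutGSTrivial S) : AutGSTrivial Sᶜ := by
  intro φ hφ
  apply h
  have := congrArg compl hφ
  rwa [← Set.image_compl_eq (MulEquiv.bijective φ), compl_compl] at this

lemma symmetric_cayAdj {S : Set G} (hS : ∀ s ∈ S, s⁻¹ ∈ S) : Symmetric (cayAdj S) := by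
  intro x y h
  rw [cayAdj_iff] at h ⊢
  have := hS _ h
  simpa using this

lemma isDRR_of_subsingleton [Subsingleton G] (S : Set G) : IsDRR G (cayAdj S) := by
  refine ⟨⟨⟨⟨fun _ => 1, fun _ => 1, fun x => Subsingleton.elim _ _,
      fun x => Subsingleton.elim _ _⟩, fun _ _ => Subsingleton.elim _ _⟩⟩, ?_⟩
  intro v w
  exact ⟨1, Subsingleton.elim _ _, fun _ _ => Subsingleton.elim _ _⟩

lemma nontrivial_of_not_isDRR {S : Set G} (h : ¬ IsDRR G (cayAdj S)) : Nontrivial G := by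
  by_contra hn
  have : Subsingleton G := not_nontrivial_iff_subsingleton.mp hn
  exact h (isDRR_of_subsingleton S)

end L1

section L2
variable {G : Type u} [Group G] [Fintype G]

lemma image_eq_of_mapsTo {T : Set G} (φ : MulAut G) (h : ∀ s ∈ T, φ s ∈ T) :
    ⇑φ '' T = T := by
  apply Set.eq_of_subset_of_ncard_le
  · rintro _ ⟨s, hs, rfl⟩; exact h s hs
  · rw [Set.ncard_image_of_injective _ (MulEquiv.injective φ)]
  · exact Set.toFinite T

/-- inversion kill -/
lemma killInv {T : Set G} (hcomm : ∀ a b : G, a * b = b * a) (g : G) (hg : g * g ≠ 1)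
    (hT : ∀ s ∈ T, s⁻¹ ∈ T) : ¬ AutGSTrivial T := by
  intro hAut
  let φ : MulAut G := ⟨⟨fun x => x⁻¹, fun x => x⁻¹, inv_inv, inv_inv⟩,
    fun a b => by simp only [Equiv.coe_fn_mk]; rw [mul_inv_rev, hcomm]⟩
  have h1 : φ = 1 := hAut φ (image_eq_of_mapsTo φ hT)
  have hgg : g⁻¹ = g := by
    have := congrArg (fun ψ : MulAut G => ψ g) h1
    simpa [φ] using this
  apply hg
  nth_rewrite 2 [← hgg]
  exact mul_inv_cancel g

/-- coset covering: if `K` is closed under multiplication, contains 1, has half the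
elements, in an exponent-2 group, then two elements outside `K` multiply into `K`. -/
lemma cosetCover (hexp : ∀ g : G, g * g = 1) {K : Set G} (hK1 : (1:G) ∈ K)
    (hKmul : ∀ a ∈ K, ∀ b ∈ K, a * b ∈ K) (hcard : 2 * K.ncard = Fintype.card G)
    {x y : G} (hx : x ∉ K) (hy : y ∉ K) : x * y ∈ K := by
  have hinv : ∀ a : G, a⁻¹ = a := fun a =>
    inv_eq_of_mul_eq_one_right (hexp a)
  have hdisj : Disjoint K ((x * ·) '' K) := by
    rw [Set.disjoint_right]
    rintro _ ⟨k, hk, rfl⟩ hxk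
    exact hx (by have := hKmul _ hxk _ hk; rwa [mul_assoc, hexp, mul_one] at this)
  have hun : (K ∪ (x * ·) '' K) = Set.univ := by
    apply Set.eq_of_subset_of_ncard_le (Set.subset_univ _)
    · rw [Set.ncard_univ, Nat.card_eq_fintype_card,
        Set.ncard_union_eq hdisj (Set.toFinite _) (Set.toFinite _),
        Set.ncard_image_of_injective _ (mul_right_injective x)]
      omega
  have hyy : y ∈ K ∪ (x * ·) '' K := hun ▸ Set.mem_univ y
  rcases hyy with h | ⟨k, hk, rfl⟩
  · exact absurd h hy
  · rwa [← mul_assoc, hexp, one_mul]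

/-- the `χ` kill for exponent-2 commutative groups -/
lemma killChi (hcomm : ∀ a b : G, a * b = b * a) (hexp : ∀ g : G, g * g = 1)
    {K : Set G} (hK1 : (1:G) ∈ K) (hKmul : ∀ a ∈ K, ∀ b ∈ K, a * b ∈ K)
    {u : G} (huK : u ∈ K) (hu1 : u ≠ 1) (hcard : 2 * K.ncard = Fintype.card G)
    {T : Set G} (hT : ∀ s ∈ T, s ∉ K → s * u ∈ T) : ¬ AutGSTrivial T := by
  classical
  intro hAut
  have hinv : ∀ a : G, a⁻¹ = a := fun a => inv_eq_of_mul_eq_one_right (hexp a)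
  have hout : ∀ a : G, a ∉ K → a * u ∉ K := by
    intro a ha hau
    exact ha (by have := hKmul _ hau _ huK; rwa [mul_assoc, hexp, mul_one] at this)
  have hmix : ∀ a ∈ K, ∀ b : G, b ∉ K → a * b ∉ K := by
    intro a ha b hb hab
    exact hb (by have := hKmul _ ha _ hab; rwa [← mul_assoc, hexp, one_mul] at this)
  let f : G → G := fun x => if x ∈ K then x else x * u
  have hinvol : ∀ x, f (f x) = x := by
    intro x
    by_cases hx : x ∈ K
    · simp [f, hx]
    · simp only [f, if_neg hx, if_neg (hout x hx)]
      rw [mul_assoc, hexp, mul_one]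
  have hmul : ∀ a b : G, f (a * b) = f a * f b := by
    intro a b
    simp only [f]
    by_cases ha : a ∈ K <;> by_cases hb : b ∈ K
    · rw [if_pos ha, if_pos hb, if_pos (hKmul _ ha _ hb)]
    · rw [if_pos ha, if_neg hb, if_neg (hmix _ ha _ hb), mul_assoc]
    · rw [if_neg ha, if_pos hb, if_neg ?_, mul_assoc, hcomm b u, ← mul_assoc]
      intro hab
      exact ha (by have := hKmul _ hab _ hb; rwa [mul_assoc, hexp, mul_one] at this)
    · rw [if_neg ha, if_neg hb, if_pos (cosetCover hexp hK1 hKmul hcard ha hb)]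
      rw [mul_assoc, ← mul_assoc u b u, hcomm u b, mul_assoc b u u, hexp, mul_one]
  let φ : MulAut G := ⟨⟨f, f, hinvol, hinvol⟩, hmul⟩
  have h1 : φ = 1 := by
    apply hAut
    apply image_eq_of_mapsTo
    intro s hs
    show f s ∈ T
    by_cases hsK : s ∈ K
    · simpa [f, hsK] using hs
    · simpa [f, hsK] using hT s hs hsK
  -- φ is nontrivial
  obtain ⟨x, hx⟩ : ∃ x : G, x ∉ K := by
    by_contra hall
    push_neg at hall
    have : K = Set.univ := Set.eq_univ_of_forall hall
    rw [this, Set.ncard_univ, Nat.card_eq_fintype_card] at hcard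
    have : 0 < Fintype.card G := Fintype.card_pos
    omega
  have := congrArg (fun ψ : MulAut G => ψ x) h1
  simp only [φ, MulEquiv.coe_mk, Equiv.coe_fn_mk, MulAut.one_apply, f, if_neg hx] at this
  exact hu1 (by have := congrArg (x⁻¹ * ·) this; simpa using this)

/-- the conjugation kill -/
lemma killConj {T : Set G} (t : G) (hnc : ∃ x : G, t * x ≠ x * t)
    (hT : ∀ s ∈ T, t * s * t⁻¹ ∈ T) : ¬ AutGSTrivial T := by
  intro hAut
  have h1 : MulAut.conj t = 1 := hAut _ (image_eq_of_mapsTo _ (by simpa using hT))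
  obtain ⟨x, hx⟩ := hnc
  have := congrArg (fun ψ : MulAut G => ψ x) h1
  simp only [MulAut.conj_apply, MulAut.one_apply] at this
  apply hx
  have h2 := congrArg (· * t) this
  simpa [mul_assoc] using h2

end L2

section L3
variable {G : Type u} [Group G] [Fintype G]

/-- interface A : |G| = 4, connection set is a single involution -/
def IfaceA (T : Set G) : Prop :=
  Fintype.card G = 4 ∧ ∃ t : G, t ≠ 1 ∧ t * t = 1 ∧ T \ {1} = {t}

/-- interface B : |G| = 2m, connection set is `R \ {1} ∪ {t}` for an index-2 subgroup `R`
of order 3 or 4 and an involution `t ∉ R`. -/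
def IfaceB (T : Set G) : Prop :=
  ∃ (R : Subgroup G) (t : G),
    ((R : Set G).ncard = 3 ∨ (R : Set G).ncard = 4) ∧
    Fintype.card G = 2 * (R : Set G).ncard ∧ t ∉ R ∧ t * t = 1 ∧
    T \ {1} = ((R : Set G) \ {1}) ∪ {t}

/-- interface C : |G| = 9, connection set inverse-closed -/
def IfaceC (T : Set G) : Prop :=
  Fintype.card G = 9 ∧ ∀ s ∈ T, s⁻¹ ∈ T

lemma killC {T : Set G} (h : IfaceC T) : ¬ AutGSTrivial T := by
  obtain ⟨hcard, hinv⟩ := h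
  have hcomm : ∀ a b : G, a * b = b * a :=
    IsPGroup.commutative_of_card_eq_prime_sq (p := 3)
      (by rw [Nat.card_eq_fintype_card, hcard]; norm_num)
  obtain ⟨g, hg⟩ : ∃ g : G, g * g ≠ 1 := by
    by_contra hall
    push_neg at hall
    have hone : ∀ g : G, g = 1 := by
      intro g
      have h2 : orderOf g ∣ 2 := orderOf_dvd_of_pow_eq_one (by rw [pow_two]; exact hall g)
      have h9 : orderOf g ∣ 9 := hcard ▸ orderOf_dvd_card
      have : orderOf g ∣ Nat.gcd 2 9 := Nat.dvd_gcd h2 h9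
      rw [show Nat.gcd 2 9 = 1 by norm_num, Nat.dvd_one] at this
      exact orderOf_eq_one_iff.mp this
    have : Fintype.card G ≤ 1 := Fintype.card_le_one_iff.mpr (fun a b => by rw [hone a, hone b])
    omega
  exact killInv hcomm g hg hinv

lemma killA {T : Set G} (h : IfaceA T) : ¬ AutGSTrivial T := by
  obtain ⟨hcard, t, ht1, ht2, hTeq⟩ := h
  have htT : t ∈ T := by
    have : t ∈ T \ {1} := by rw [hTeq]; rfl
    exact this.1
  have hcomm : ∀ a b : G, a * b = b * a :=
    IsPGroup.commutative_of_card_eq_prime_sq (p := 2)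
      (by rw [Nat.card_eq_fintype_card, hcard]; norm_num)
  by_cases hex : ∀ g : G, g * g = 1
  · -- exponent 2 : χ-kill with K = {1, t}
    refine killChi hcomm hex (K := {1, t}) (by simp) ?_ (u := t) (by simp) ht1 ?_ (T := T) ?_
    · rintro a (rfl | rfl) b (rfl | rfl) <;>
        simp [Set.mem_insert_iff, ht2]
    · rw [Set.ncard_pair (Ne.symm ht1), hcard]
    · intro s hs hsK
      exfalso
      rcases eq_or_ne s 1 with rfl | hs1
      · exact hsK (by simp)
      · have : s ∈ T \ {1} := ⟨hs, hs1⟩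
        rw [hTeq] at this
        exact hsK (by simp [this])
  · push_neg at hex
    obtain ⟨g, hg⟩ := hex
    refine killInv hcomm g hg ?_
    intro s hs
    rcases eq_or_ne s 1 with rfl | hs1
    · simpa using hs
    · have : s ∈ T \ {1} := ⟨hs, hs1⟩
      rw [hTeq] at this
      rw [Set.mem_singleton_iff] at this
      subst this
      rwa [inv_eq_of_mul_eq_one_right ht2]

lemma killB {T : Set G} (h : IfaceB T) : ¬ AutGSTrivial T := by
  obtain ⟨R, t, hm, hcardG, htR, ht2, hTeq⟩ := h
  have ht1 : t ≠ 1 := fun h => htR (h ▸ R.one_mem)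
  have htinv : t⁻¹ = t := inv_eq_of_mul_eq_one_right ht2
  have hRT : (R : Set G) \ {1} ⊆ T := by
    intro x hx
    have : x ∈ T \ {1} := by rw [hTeq]; exact Or.inl hx
    exact this.1
  have htT : t ∈ T := by
    have : t ∈ T \ {1} := by rw [hTeq]; exact Or.inr rfl
    exact this.1
  have hcardR : Nat.card ↥R = (R : Set G).ncard := Nat.card_coe_set_eq _
  by_cases hcomm : ∀ a b : G, a * b = b * a
  · by_cases hex : ∀ g : G, g * g = 1
    · -- exponent 2
      have hinv : ∀ a : G, a⁻¹ = a := fun a => inv_eq_of_mul_eq_one_right (hex a)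
      rcases hm with hm3 | hm4
      · -- |R| = 3 impossible in exponent 2
        exfalso
        have : ∀ a : G, a ∈ R → a = 1 := by
          intro a ha
          have h2 : orderOf (⟨a, ha⟩ : ↥R) ∣ 2 :=
            orderOf_dvd_of_pow_eq_one (by
              ext
              push_cast
              rw [pow_two]
              exact hex a)
          have h3 : orderOf (⟨a, ha⟩ : ↥R) ∣ 3 := by
            rw [← hm3, ← hcardR]
            exact orderOf_dvd_natCard _
          have : orderOf (⟨a, ha⟩ : ↥R) ∣ Nat.gcd 2 3 := Nat.dvd_gcd h2 h3
          rw [show Nat.gcd 2 3 = 1 by norm_num, Nat.dvd_one] at this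
          have := orderOf_eq_one_iff.mp this
          exact congrArg Subtype.val this
        have hsub : (R : Set G) ⊆ {1} := fun a ha => this a ha
        have := Set.ncard_le_ncard hsub (Set.finite_singleton 1)
        rw [hm3, Set.ncard_singleton] at this
        omega
      · -- |R| = 4 : χ-kill
        obtain ⟨u, huR, hu1⟩ : ∃ u, u ∈ (R : Set G) ∧ u ≠ 1 := by
          by_contra hno
          push_neg at hno
          have hsub : (R : Set G) ⊆ {1} := fun a ha => hno a ha
          have := Set.ncard_le_ncard hsub (Set.finite_singleton 1)
          rw [hm4, Set.ncard_singleton] at this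
          omega
        have hut : u ≠ t := fun h => htR (h ▸ huR)
        have hut1 : u * t ≠ 1 := by
          intro h
          have hteq : t = u := by rw [eq_inv_of_mul_eq_one_right h, hinv]
          exact htR (hteq ▸ huR)
        have hutu : u * t ≠ u := fun h => ht1 (mul_left_cancel (by rw [h, mul_one]))
        have hutt : u * t ≠ t := fun h => hu1 (mul_right_cancel (by rw [h, one_mul]))
        have hlc : ∀ a b c : G, a * (b * c) = b * (a * c) := fun a b c => by
          rw [← mul_assoc, hcomm a b, mul_assoc]
        refine killChi hcomm hex (K := {1, u, t, u*t}) (by simp) ?_ (u := u)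
          (by simp) hu1 ?_ (T := T) ?_
        · rintro a (rfl | rfl | rfl | rfl) b (rfl | rfl | rfl | rfl) <;>
            simp only [Set.mem_insert_iff, Set.mem_singleton_iff, one_mul, mul_one,
              hcomm, hlc, mul_assoc, hex] <;> tauto
        · have h41 : (1:G) ∉ ({u, t, u*t} : Set G) := by
            simp only [Set.mem_insert_iff, Set.mem_singleton_iff]
            push_neg
            exact ⟨Ne.symm hu1, Ne.symm ht1, Ne.symm hut1⟩
          have h4u : u ∉ ({t, u*t} : Set G) := by
            simp only [Set.mem_insert_iff, Set.mem_singleton_iff]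
            push_neg
            exact ⟨hut, fun h => hutu h.symm⟩
          have h4t : t ∉ ({u*t} : Set G) := by
            simp only [Set.mem_singleton_iff]
            exact fun h => hutt h.symm
          rw [Set.ncard_insert_of_notMem h41 (Set.toFinite _),
            Set.ncard_insert_of_notMem h4u (Set.toFinite _),
            Set.ncard_insert_of_notMem h4t (Set.toFinite _),
            Set.ncard_singleton, hcardG, hm4]
        · intro s hs hsK
          simp only [Set.mem_insert_iff, Set.mem_singleton_iff] at hsK
          push_neg at hsK
          obtain ⟨hs1, hsu, hst, _⟩ := hsK
          have hmem : s ∈ T \ {1} := ⟨hs, hs1⟩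
          rw [hTeq] at hmem
          rcases hmem with hsR | hsT
          · have hsuR : s * u ∈ R := R.mul_mem hsR.1 huR
            have hsu1 : s * u ≠ 1 := by
              intro h
              exact hsu (by rw [eq_inv_of_mul_eq_one_left h, hinv])
            exact hRT ⟨hsuR, hsu1⟩
          · exact absurd hsT hst
    · push_neg at hex
      obtain ⟨g, hg⟩ := hex
      refine killInv hcomm g hg ?_
      intro s hs
      rcases eq_or_ne s 1 with rfl | hs1
      · simpa using hs
      · have hmem : s ∈ T \ {1} := ⟨hs, hs1⟩
        rw [hTeq] at hmem
        rcases hmem with hsR | hsT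
        · refine hRT ⟨R.inv_mem hsR.1, ?_⟩
          simp only [Set.mem_singleton_iff, inv_eq_one]
          exact fun h => hsR.2 h
        · rw [Set.mem_singleton_iff] at hsT
          subst hsT
          rwa [htinv]
  · -- non-commutative case : conjugation by t
    have hlmem : ∀ r ∈ R, t * r ∉ R := by
      intro r hr h
      apply htR
      have := R.mul_mem h (R.inv_mem hr)
      simpa [mul_assoc] using this
    have hrmem : ∀ r ∈ R, r * t ∉ R := by
      intro r hr h
      apply htR
      have := R.mul_mem (R.inv_mem hr) h
      simpa [← mul_assoc] using this
    have hcc : (R : Set G).ncard + ((R : Set G)ᶜ).ncard = Fintype.card G := by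
      rw [← Nat.card_eq_fintype_card]
      exact Set.ncard_add_ncard_compl _
    have hlR : ((t * ·) '' (R : Set G)) = (R : Set G)ᶜ := by
      apply Set.eq_of_subset_of_ncard_le
      · rintro _ ⟨r, hr, rfl⟩
        exact hlmem r hr
      · rw [Set.ncard_image_of_injective _ (mul_right_injective t)]
        omega
      · exact Set.toFinite _
    have hrR : ((· * t) '' (R : Set G)) = (R : Set G)ᶜ := by
      apply Set.eq_of_subset_of_ncard_le
      · rintro _ ⟨r, hr, rfl⟩
        exact hrmem r hr
      · rw [Set.ncard_image_of_injective _ (mul_left_injective t)]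
        omega
      · exact Set.toFinite _
    have hconj : ∀ s ∈ R, t * s * t⁻¹ ∈ R := by
      intro s hs
      have h1 : t * s ∈ (R : Set G)ᶜ := by
        rw [← hlR]
        exact ⟨s, hs, rfl⟩
      rw [← hrR] at h1
      obtain ⟨r, hr, hrt⟩ := h1
      have : t * s * t⁻¹ = r := by rw [← hrt]; simp [mul_assoc]
      rw [this]
      exact hr
    have hnc : ∃ x : G, t * x ≠ x * t := by
      by_contra hc
      push_neg at hc
      apply hcomm
      have hRcomm : ∀ r ∈ R, ∀ r' ∈ R, r * r' = r' * r := by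
        rcases hm with hm3 | hm4
        · letI : Fact (Nat.Prime 3) := ⟨by norm_num⟩
          have : IsCyclic ↥R := isCyclic_of_prime_card (by rw [hcardR, hm3])
          letI : CommGroup ↥R := IsCyclic.commGroup
          intro r hr r' hr'
          exact congrArg Subtype.val (mul_comm (⟨r, hr⟩ : ↥R) ⟨r', hr'⟩)
        · have hc4 : ∀ a b : ↥R, a * b = b * a :=
            IsPGroup.commutative_of_card_eq_prime_sq (p := 2) (by rw [hcardR, hm4]; norm_num)
          intro r hr r' hr'
          exact congrArg Subtype.val (hc4 ⟨r, hr⟩ ⟨r', hr'⟩)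
      have hcover : ∀ a : G, a ∈ (R : Set G) ∨ ∃ r ∈ (R : Set G), a = r * t := by
        intro a
        by_cases ha : a ∈ (R : Set G)
        · exact Or.inl ha
        · right
          have h2 : a ∈ (R : Set G)ᶜ := ha
          rw [← hrR] at h2
          obtain ⟨r, hr, hrt⟩ := h2
          exact ⟨r, hr, hrt.symm⟩
      intro a b
      rcases hcover a with ha | ⟨r, hr, rfl⟩ <;> rcases hcover b with hb | ⟨r', hr', rfl⟩
      · exact hRcomm a ha b hb
      · calc a * (r' * t) = (a * r') * t := by rw [mul_assoc]
          _ = (r' * a) * t := by rw [hRcomm a ha r' hr']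
          _ = r' * (a * t) := by rw [mul_assoc]
          _ = r' * (t * a) := by rw [hc a]
          _ = (r' * t) * a := by rw [mul_assoc]
      · calc (r * t) * b = r * (t * b) := by rw [mul_assoc]
          _ = r * (b * t) := by rw [hc b]
          _ = (r * b) * t := by rw [mul_assoc]
          _ = (b * r) * t := by rw [hRcomm r hr b hb]
          _ = b * (r * t) := by rw [mul_assoc]
      · calc (r * t) * (r' * t) = r * (t * r') * t := by rw [mul_assoc, mul_assoc, mul_assoc]
          _ = r * (r' * t) * t := by rw [hc r']
          _ = (r * r') * (t * t) := by rw [mul_assoc, mul_assoc, mul_assoc]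
          _ = (r' * r) * (t * t) := by rw [hRcomm r hr r' hr']
          _ = r' * (r * t) * t := by rw [mul_assoc, mul_assoc, mul_assoc]
          _ = r' * (t * r) * t := by rw [hc r]
          _ = (r' * t) * (r * t) := by rw [mul_assoc, mul_assoc, mul_assoc]
    refine killConj t hnc ?_
    intro s hs
    rcases eq_or_ne s 1 with rfl | hs1
    · simpa using hs
    · have hmem : s ∈ T \ {1} := ⟨hs, hs1⟩
      rw [hTeq] at hmem
      rcases hmem with hsR | hsT
      · have h1 : t * s * t⁻¹ ∈ R := hconj s hsR.1
        have h2 : t * s * t⁻¹ ∉ ({1} : Set G) := by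
          simp only [Set.mem_singleton_iff]
          intro h
          apply hsR.2
          have hseq : s = 1 := by
            have := congrArg (fun x => t⁻¹ * x * t) h
            simpa [mul_assoc] using this
          simp [hseq]
        exact hRT ⟨h1, h2⟩
      · rw [Set.mem_singleton_iff] at hsT
        rw [hsT]
        have heq : t * t * t⁻¹ = t := by group
        rw [heq]
        exact htT

end L3

set_option linter.unusedSectionVars false

section Infra
variable {G : Type u} [Group G] [Fintype G]
variable {X Y : Type u} [Fintype X] [Fintype Y]

lemma card_prod_of_equiv (e : G ≃ X × Y) : Fintype.card G = Fintype.card X * Fintype.card Y := by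
  rw [Fintype.card_congr e, Fintype.card_prod]

lemma ncard_fiber1 (e : G ≃ X × Y) (x0 : X) :
    {v : G | (e v).1 = x0}.ncard = Fintype.card Y := by
  rw [← Nat.card_coe_set_eq, ← Nat.card_eq_fintype_card]
  apply Nat.card_congr
  refine ⟨fun v => (e v.1).2, fun y => ⟨e.symm (x0, y), by simp⟩, ?_, ?_⟩
  · rintro ⟨v, hv⟩
    apply Subtype.ext
    simp only [Set.mem_setOf_eq] at hv
    show e.symm (x0, (e v).2) = v
    rw [← hv, Prod.mk.eta, Equiv.symm_apply_apply]
  · intro y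
    simp

lemma ncard_fiber2 (e : G ≃ X × Y) (y0 : Y) :
    {v : G | (e v).2 = y0}.ncard = Fintype.card X := by
  rw [← Nat.card_coe_set_eq, ← Nat.card_eq_fintype_card]
  apply Nat.card_congr
  refine ⟨fun v => (e v.1).1, fun x => ⟨e.symm (x, y0), by simp⟩, ?_, ?_⟩
  · rintro ⟨v, hv⟩
    apply Subtype.ext
    simp only [Set.mem_setOf_eq] at hv
    show e.symm ((e v).1, y0) = v
    rw [← hv, Prod.mk.eta, Equiv.symm_apply_apply]
  · intro x
    simp

/-- the "lines" through `u` (excluding `u`) -/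
def Lset (e : G ≃ X × Y) (u : G) : Set G :=
  {v : G | v ≠ u ∧ ((e v).1 = (e u).1 ∨ (e v).2 = (e u).2)}

/-- the "diagonal" of `u` : both coordinates differ -/
def Dset (e : G ≃ X × Y) (u : G) : Set G :=
  {v : G | (e v).1 ≠ (e u).1 ∧ (e v).2 ≠ (e u).2}

lemma eq_of_coords (e : G ≃ X × Y) {u v : G} (h1 : (e v).1 = (e u).1)
    (h2 : (e v).2 = (e u).2) : v = u := by
  have : e v = e u := Prod.ext h1 h2
  exact e.injective this

lemma ncard_Lset (e : G ≃ X × Y) (u : G) :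
    (Lset e u).ncard = (Fintype.card Y - 1) + (Fintype.card X - 1) := by
  have hdecomp : Lset e u =
      ({v : G | (e v).1 = (e u).1} \ {u}) ∪ ({v : G | (e v).2 = (e u).2} \ {u}) := by
    ext v
    simp only [Lset, Set.mem_setOf_eq, Set.mem_union, Set.mem_diff, Set.mem_singleton_iff]
    tauto
  have hdisj : Disjoint ({v : G | (e v).1 = (e u).1} \ {u})
      ({v : G | (e v).2 = (e u).2} \ {u}) := by
    rw [Set.disjoint_left]
    rintro v ⟨hv1, hvu⟩ ⟨hv2, _⟩
    exact hvu (eq_of_coords e hv1 hv2)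
  rw [hdecomp, Set.ncard_union_eq hdisj (Set.toFinite _) (Set.toFinite _),
    Set.ncard_diff_singleton_of_mem (by simp),
    Set.ncard_diff_singleton_of_mem (by simp),
    ncard_fiber1 e, ncard_fiber2 e]

lemma ncard_Dset (e : G ≃ X × Y) (u : G) :
    (Dset e u).ncard = (Fintype.card X - 1) * (Fintype.card Y - 1) := by
  haveI : Nonempty X := ⟨(e u).1⟩
  haveI : Nonempty Y := ⟨(e u).2⟩
  have hcompl : (Dset e u)ᶜ = Lset e u ∪ {u} := by
    ext v
    simp only [Dset, Lset, Set.mem_compl_iff, Set.mem_setOf_eq, Set.mem_union,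
      Set.mem_singleton_iff]
    by_cases hvu : v = u
    · subst hvu; tauto
    · tauto
  have hsum := Set.ncard_add_ncard_compl (Dset e u) (Set.toFinite _)
  rw [hcompl] at hsum
  have hu : u ∉ Lset e u := fun h => h.1 rfl
  rw [Set.ncard_union_eq (by rw [Set.disjoint_singleton_right]; exact hu)
    (Set.toFinite _) (Set.toFinite _), Set.ncard_singleton, ncard_Lset e u,
    Nat.card_eq_fintype_card, card_prod_of_equiv e] at hsum
  have hx : 1 ≤ Fintype.card X := Fintype.card_pos
  have hy : 1 ≤ Fintype.card Y := Fintype.card_pos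
  obtain ⟨a, ha⟩ := Nat.exists_eq_add_of_le hx
  obtain ⟨b, hb⟩ := Nat.exists_eq_add_of_le hy
  rw [ha, hb] at hsum ⊢
  have hexp : (1 + a) * (1 + b) = a * b + a + b + 1 := by ring
  have hexp2 : a * b = (1 + a - 1) * (1 + b - 1) := by simp
  rw [hexp] at hsum
  omega

lemma mem_Dset_symm (e : G ≃ X × Y) {u v : G} (h : v ∈ Dset e u) : u ∈ Dset e v :=
  ⟨fun h1 => h.1 h1.symm, fun h2 => h.2 h2.symm⟩

lemma mem_Lset_symm (e : G ≃ X × Y) {u v : G} (h : v ∈ Lset e u) : u ∈ Lset e v :=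
  ⟨fun h1 => h.1 h1.symm, by rcases h.2 with h2 | h2; exacts [Or.inl h2.symm, Or.inr h2.symm]⟩

lemma not_mem_Dset_of_mem_Lset (e : G ≃ X × Y) {u v : G} (h : v ∈ Lset e u) :
    v ∉ Dset e u := by
  rcases h.2 with h2 | h2
  · exact fun hd => hd.1 h2
  · exact fun hd => hd.2 h2

lemma mem_Lset_or (e : G ≃ X × Y) {u v : G} (hne : v ≠ u) :
    v ∈ Lset e u ∨ v ∈ Dset e u := by
  by_cases h1 : (e v).1 = (e u).1
  · exact Or.inl ⟨hne, Or.inl h1⟩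
  · by_cases h2 : (e v).2 = (e u).2
    · exact Or.inl ⟨hne, Or.inr h2⟩
    · exact Or.inr ⟨h1, h2⟩

end Infra

section DecPart
variable {G : Type u} [Group G] [Fintype G]

/-- A (nontrivial) cartesian decomposition of a digraph on `G`. -/
structure Dec (Adj : G → G → Prop) where
  X : Type u
  Y : Type u
  fX : Fintype X
  fY : Fintype Y
  A : X → X → Prop
  B : Y → Y → Prop
  e : G ≃ X × Y
  hX : 2 ≤ @Fintype.card X fX
  hY : 2 ≤ @Fintype.card Y fY
  hadj : ∀ v w, Adj v w ↔ cartAdj A B (e v) (e w)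

lemma dec_of_not_prime {Adj : G → G → Prop} (hnt : ∃ x y : G, x ≠ y)
    (h : ¬ IsPrimeDigraph Adj) : Nonempty (Dec Adj) := by
  have hQ : ∃ (X Y : Type u) (A : X → X → Prop) (B : Y → Y → Prop) (e : G ≃ X × Y),
      (∃ x₁ x₂ : X, x₁ ≠ x₂) ∧ (∃ y₁ y₂ : Y, y₁ ≠ y₂) ∧
        ∀ v w : G, Adj v w ↔ cartAdj A B (e v) (e w) := by
    by_contra hq
    exact h ⟨hnt, hq⟩
  obtain ⟨X, Y, A, B, e, hx, hy, hadj⟩ := hQ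
  haveI : Finite (X × Y) := Finite.of_equiv G e
  obtain ⟨y1, y2, hy12⟩ := hy
  obtain ⟨x1, x2, hx12⟩ := hx
  haveI : Finite X := Finite.of_injective (fun x => (x, y1))
    (fun a b hab => congrArg Prod.fst hab)
  haveI : Finite Y := Finite.of_injective (fun y => (x1, y))
    (fun a b hab => congrArg Prod.snd hab)
  haveI fX : Fintype X := Fintype.ofFinite X
  haveI fY : Fintype Y := Fintype.ofFinite Y
  refine ⟨⟨X, Y, fX, fY, A, B, e, ?_, ?_, hadj⟩⟩
  · exact Fintype.one_lt_card_iff_nontrivial.mpr ⟨x1, x2, hx12⟩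
  · exact Fintype.one_lt_card_iff_nontrivial.mpr ⟨y1, y2, hy12⟩

/-- swap the two factors of a decomposition -/
def Dec.swap {Adj : G → G → Prop} (D : Dec Adj) : Dec Adj where
  X := D.Y
  Y := D.X
  fX := D.fY
  fY := D.fX
  A := D.B
  B := D.A
  e := D.e.trans (Equiv.prodComm _ _)
  hX := D.hY
  hY := D.hX
  hadj := by
    intro v w
    rw [D.hadj v w]
    unfold cartAdj
    simp only [Equiv.trans_apply, Equiv.prodComm_apply, Prod.fst_swap, Prod.snd_swap]
    tauto

/-- transfer a decomposition along a pointwise-equivalent adjacency -/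
def Dec.congr {Adj Adj' : G → G → Prop} (h : ∀ v w, Adj v w ↔ Adj' v w) (D : Dec Adj) :
    Dec Adj' where
  X := D.X
  Y := D.Y
  fX := D.fX
  fY := D.fY
  A := D.A
  B := D.B
  e := D.e
  hX := D.hX
  hY := D.hY
  hadj := fun v w => (h v w).symm.trans (D.hadj v w)

end DecPart

section Arith

lemma arith_red {a b c d : ℕ} (ha : 2 ≤ a) (hb : 2 ≤ b) (hc : 2 ≤ c) (hd : 2 ≤ d)
    (hab : a ≤ b) (hcd : c ≤ d) (hn : a * b = c * d)
    (h1 : (a-1)*(b-1) ≤ (c-1)+(d-1)) (h2 : (c-1)*(d-1) ≤ (a-1)+(b-1)) :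
    (a = 2 ∧ c = 2 ∧ b = d) ∨ (a = 3 ∧ b = 3 ∧ c = 3 ∧ d = 3) ∨
    (a = 2 ∧ b = 6 ∧ c = 3 ∧ d = 4) ∨ (a = 3 ∧ b = 4 ∧ c = 2 ∧ d = 6) := by
  obtain ⟨a1, rfl⟩ : ∃ a1, a = a1 + 1 := ⟨a - 1, by omega⟩
  obtain ⟨b1, rfl⟩ : ∃ b1, b = b1 + 1 := ⟨b - 1, by omega⟩
  obtain ⟨c1, rfl⟩ : ∃ c1, c = c1 + 1 := ⟨c - 1, by omega⟩
  obtain ⟨d1, rfl⟩ : ∃ d1, d = d1 + 1 := ⟨d - 1, by omega⟩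
  simp only [Nat.add_sub_cancel] at h1 h2
  have ha1 : 1 ≤ a1 := by omega
  have hb1 : 1 ≤ b1 := by omega
  have hc1 : 1 ≤ c1 := by omega
  have hd1 : 1 ≤ d1 := by omega
  have hab1 : a1 ≤ b1 := by omega
  have hcd1 : c1 ≤ d1 := by omega
  have hn' : a1*b1 + a1 + b1 = c1*d1 + c1 + d1 := by
    have e1 : (a1+1)*(b1+1) = a1*b1 + a1 + b1 + 1 := by ring
    have e2 : (c1+1)*(d1+1) = c1*d1 + c1 + d1 + 1 := by ring
    rw [e1, e2] at hn
    linarith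
  rcases Nat.lt_or_ge a1 2 with ha2 | ha2
  · -- a1 = 1, i.e. a = 2
    have ha1e : a1 = 1 := by omega
    subst ha1e
    simp only [one_mul] at h1 hn'
    rcases Nat.lt_or_ge c1 2 with hc2 | hc2
    · -- c = 2 : then b = d
      have hc1e : c1 = 1 := by omega
      subst hc1e
      left
      simp only [one_mul] at hn' h2
      omega
    · -- c ≥ 3
      have hkey : c1 * d1 ≤ c1 + d1 + 1 := by linarith
      have hc1e : c1 = 2 := by
        by_contra hne
        have h3c : 3 ≤ c1 := by omega
        have h3 : 3*d1 ≤ c1*d1 := Nat.mul_le_mul_right d1 h3c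
        linarith
      subst hc1e
      have hd1e : d1 = 2 ∨ d1 = 3 := by
        have : 2*d1 ≤ 2 + d1 + 1 := hkey
        omega
      rcases hd1e with rfl | rfl
      · exfalso; omega
      · right; right; left
        omega
  · rcases Nat.lt_or_ge c1 2 with hc2 | hc2
    · -- c = 2, a ≥ 3 : mirror
      have hc1e : c1 = 1 := by omega
      subst hc1e
      simp only [one_mul] at h2 hn'
      have hkey : a1 * b1 ≤ a1 + b1 + 1 := by linarith
      have ha1e : a1 = 2 := by
        by_contra hne
        have h3a : 3 ≤ a1 := by omega
        have h3 : 3*b1 ≤ a1*b1 := Nat.mul_le_mul_right b1 h3a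
        linarith
      subst ha1e
      have hb1e : b1 = 2 ∨ b1 = 3 := by
        have : 2*b1 ≤ 2 + b1 + 1 := hkey
        omega
      rcases hb1e with rfl | rfl
      · exfalso; omega
      · right; right; right
        omega
    · -- a, c ≥ 3 : forces all = 3
      have hb2 : 2 ≤ b1 := le_trans ha2 hab1
      have hd2 : 2 ≤ d1 := le_trans hc2 hcd1
      have h2b : 2*b1 ≤ c1 + d1 := le_trans (Nat.mul_le_mul_right b1 ha2) h1
      have h2a : 2*a1 ≤ c1 + d1 := by
        have hm : a1*2 ≤ a1*b1 := Nat.mul_le_mul_left a1 hb2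
        have hcm : 2*a1 = a1*2 := Nat.mul_comm 2 a1
        linarith
      have h2d : 2*d1 ≤ a1 + b1 := le_trans (Nat.mul_le_mul_right d1 hc2) h2
      have h2c : 2*c1 ≤ a1 + b1 := by
        have hm : c1*2 ≤ c1*d1 := Nat.mul_le_mul_left c1 hd2
        have hcm : 2*c1 = c1*2 := Nat.mul_comm 2 c1
        linarith
      have hba : b1 = a1 := by omega
      have hdc : d1 = c1 := by omega
      rw [hba, hdc] at h1
      rw [hba, hdc] at h2
      have haa : a1*a1 ≤ 2*c1 := by linarith
      have hcc : c1*c1 ≤ 2*a1 := by linarith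
      have ha1e : a1 = 2 := by
        by_contra hne
        have h3a : 3 ≤ a1 := by omega
        have q1 : (a1*a1)*(a1*a1) ≤ (2*c1)*(2*c1) := Nat.mul_le_mul haa haa
        have q2 : (2*c1)*(2*c1) = 4*(c1*c1) := by ring
        have q3 : 4*(c1*c1) ≤ 4*(2*a1) := Nat.mul_le_mul_left 4 hcc
        have e27 : 3*(3*3) ≤ a1*(a1*a1) := Nat.mul_le_mul h3a (Nat.mul_le_mul h3a h3a)
        have e27' : a1*(3*(3*3)) ≤ a1*(a1*(a1*a1)) := Nat.mul_le_mul_left a1 e27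
        have eq1 : (a1*a1)*(a1*a1) = a1*(a1*(a1*a1)) := by ring
        have eq2 : a1*(3*(3*3)) = 27*a1 := by ring
        have fin : 27*a1 ≤ 4*(2*a1) := by
          calc 27*a1 = a1*(3*(3*3)) := eq2.symm
            _ ≤ a1*(a1*(a1*a1)) := e27'
            _ = (a1*a1)*(a1*a1) := eq1.symm
            _ ≤ (2*c1)*(2*c1) := q1
            _ = 4*(c1*c1) := q2
            _ ≤ 4*(2*a1) := q3
        omega
      have hc1e : c1 = 2 := by
        rw [ha1e] at hcc
        by_contra hne
        have h3c : 3 ≤ c1 := by omega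
        have : 3*3 ≤ c1*c1 := Nat.mul_le_mul h3c h3c
        linarith
      right; left
      omega

end Arith

section Disc
variable {G : Type u} [Group G] [Fintype G]

lemma exists_component {Adj : G → G → Prop} (h : ¬ WeaklyConnected Adj) :
    ∃ P : Set G, P.Nonempty ∧ Pᶜ.Nonempty ∧
      ∀ u ∈ P, ∀ v : G, (Adj u v ∨ Adj v u) → v ∈ P := by
  unfold WeaklyConnected at h
  push_neg at h
  obtain ⟨x0, y0, hn⟩ := h
  refine ⟨{v | Relation.ReflTransGen (fun a b => Adj a b ∨ Adj b a) x0 v},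
    ⟨x0, Relation.ReflTransGen.refl⟩, ⟨y0, hn⟩, ?_⟩
  intro u hu v hv
  exact Relation.ReflTransGen.tail hu hv

lemma not_both_disc {Adj1 Adj2 : G → G → Prop} (hcompl : ∀ u v, Adj2 u v ↔ ¬ Adj1 u v)
    (h1 : ¬ WeaklyConnected Adj1) (h2 : ¬ WeaklyConnected Adj2) : False := by
  obtain ⟨P, ⟨p, hp⟩, ⟨q, hq⟩, hcl⟩ := exists_component h1
  apply h2
  intro x y
  have hcross : ∀ u ∈ P, ∀ w ∉ P, (Adj2 u w ∨ Adj2 w u) := by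
    intro u hu w hw
    left
    rw [hcompl]
    intro hadj
    exact hw (hcl u hu w (Or.inl hadj))
  have hcross' : ∀ u ∈ P, ∀ w ∉ P, (Adj2 w u ∨ Adj2 u w) := by
    intro u hu w hw
    left
    rw [hcompl]
    intro hadj
    exact hw (hcl u hu w (Or.inr hadj))
  by_cases hx : x ∈ P <;> by_cases hy : y ∈ P
  · exact Relation.ReflTransGen.trans
      (Relation.ReflTransGen.single (hcross x hx q hq))
      (Relation.ReflTransGen.single (hcross' y hy q hq))
  · exact Relation.ReflTransGen.single (hcross x hx y hy)
  · exact Relation.ReflTransGen.single (hcross' y hy x hx)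
  · exact Relation.ReflTransGen.trans
      (Relation.ReflTransGen.single (hcross' p hp x hx))
      (Relation.ReflTransGen.single (hcross p hp y hy))

end Disc

section Helpers
variable {G : Type u} [Group G] [Fintype G]

lemma cay_one (T : Set G) (s : G) : cayAdj T 1 s ↔ s ∈ T := by
  rw [cayAdj_iff]; simp

lemma cay_inv_mem {T : Set G} {s : G} (h : cayAdj T s 1) : s⁻¹ ∈ T := by
  rw [cayAdj_iff] at h; simpa using h

lemma cay_translate (T : Set G) (v w a : G) : cayAdj T (v * a) (w * a) ↔ cayAdj T v w := by
  rw [cayAdj_iff, cayAdj_iff]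
  have : w * a * (v * a)⁻¹ = w * v⁻¹ := by group
  rw [this]

lemma Dec.not_adj {Adj : G → G → Prop} (D : Dec Adj) {u v : G} (h : v ∈ Dset D.e u) :
    ¬ Adj u v := by
  intro ha
  rw [D.hadj] at ha
  rcases ha with ⟨h1, _⟩ | ⟨h2, _⟩
  · exact h.1 h1.symm
  · exact h.2 h2.symm

lemma Dec.mem_Lset_of_adj {Adj : G → G → Prop} (D : Dec Adj) {u v : G} (hne : v ≠ u)
    (h : Adj u v) : v ∈ Lset D.e u := by
  rw [D.hadj] at h
  rcases h with ⟨h1, _⟩ | ⟨h2, _⟩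
  · exact ⟨hne, Or.inl h1.symm⟩
  · exact ⟨hne, Or.inr h2.symm⟩

lemma Dec.mem_Lset_of_adj' {Adj : G → G → Prop} (D : Dec Adj) {u v : G} (hne : v ≠ u)
    (h : Adj v u) : v ∈ Lset D.e u := by
  rw [D.hadj] at h
  rcases h with ⟨h1, _⟩ | ⟨h2, _⟩
  · exact ⟨hne, Or.inl h1⟩
  · exact ⟨hne, Or.inr h2⟩

lemma Dec.adj_of_mem_Dset {T : Set G} (D : Dec (cayAdj Tᶜ)) {u v : G}
    (h : v ∈ Dset D.e u) : cayAdj T u v := by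
  have := D.not_adj h
  rw [cayAdj_compl, not_not] at this
  exact this

lemma outdeg (T : Set G) (u : G) :
    {v : G | v ≠ u ∧ cayAdj T u v}.ncard = (T \ {1}).ncard := by
  have himg : {v : G | v ≠ u ∧ cayAdj T u v} = (fun s => s * u) '' (T \ {1}) := by
    ext v
    simp only [Set.mem_setOf_eq, Set.mem_image, Set.mem_diff, Set.mem_singleton_iff]
    constructor
    · rintro ⟨hne, s, hs, rfl⟩
      exact ⟨s, ⟨hs, fun h => hne (by rw [h, one_mul])⟩, rfl⟩
    · rintro ⟨s, ⟨hs, hs1⟩, rfl⟩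
      refine ⟨fun h => hs1 ?_, ⟨s, hs, rfl⟩⟩
      have : s * u = 1 * u := by rw [h, one_mul]
      exact mul_right_cancel this
  rw [himg, Set.ncard_image_of_injective _ (mul_left_injective u)]

lemma indeg (T : Set G) (u : G) :
    {v : G | v ≠ u ∧ cayAdj T v u}.ncard = (T \ {1}).ncard := by
  have himg : {v : G | v ≠ u ∧ cayAdj T v u} = (fun s => s⁻¹ * u) '' (T \ {1}) := by
    ext v
    simp only [Set.mem_setOf_eq, Set.mem_image, Set.mem_diff, Set.mem_singleton_iff]
    constructor
    · rintro ⟨hne, hadj⟩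
      obtain ⟨s, hs, hu⟩ := hadj
      refine ⟨s, ⟨hs, fun h1 => hne ?_⟩, ?_⟩
      · rw [h1, one_mul] at hu; exact hu.symm
      · rw [hu]; group
    · rintro ⟨s, ⟨hs, hs1⟩, rfl⟩
      constructor
      · intro h
        apply hs1
        have h2 : s * (s⁻¹ * u) = s * u := by rw [h]
        rw [← mul_assoc, mul_inv_cancel, one_mul] at h2
        have : s * u = 1 * u := by rw [← h2, one_mul]
        exact mul_right_cancel this
      · exact ⟨s, hs, by group⟩
  rw [himg]
  apply Set.ncard_image_of_injective
  intro x y h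
  simp only at h
  have := mul_right_cancel h
  exact inv_injective this

lemma twoElt {X : Type u} [Fintype X] (h2 : Fintype.card X = 2) {x y z : X}
    (hyx : y ≠ x) (hzy : z ≠ y) : z = x := by
  by_contra hzx
  classical
  have hcard : ({x, y, z} : Finset X).card = 3 := by
    rw [Finset.card_insert_of_notMem (by simp [Ne.symm hyx, Ne.symm hzx]),
      Finset.card_insert_of_notMem (by simp [Ne.symm hzy]), Finset.card_singleton]
  have hle := Finset.card_le_univ ({x, y, z} : Finset X)
  rw [hcard, h2] at hle
  omega

/-- in a rook structure with 2 rows, three pairwise-distinct pairwise-"line" vertices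
share their first coordinate. -/
lemma tripleLemma {X Y : Type u} [Fintype X] [Fintype Y] (e : G ≃ X × Y)
    (hX2 : Fintype.card X = 2) {q r s : G} (hqr : r ≠ q) (hqs : s ≠ q) (hrs : s ≠ r)
    (haqr : r ∈ Lset e q) (haqs : s ∈ Lset e q) (hars : s ∈ Lset e r) :
    (e r).1 = (e q).1 := by
  rcases haqr.2 with h1 | h1
  · exact h1
  · -- (e r).2 = (e q).2 : the second-coordinate fiber of q is {q, r}
    exfalso
    have hfib : {v : G | (e v).2 = (e q).2} = {q, r} := by
      symm
      apply Set.eq_of_subset_of_ncard_le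
      · rintro v (rfl | rfl)
        · exact rfl
        · exact h1
      · rw [ncard_fiber2 e, Set.ncard_pair hqr.symm, hX2]
      · exact Set.toFinite _
    have hs1 : (e s).1 = (e q).1 := by
      rcases haqs.2 with h2 | h2
      · exact h2
      · have : s ∈ ({q, r} : Set G) := hfib ▸ h2
        rcases this with rfl | rfl
        · exact absurd rfl hqs
        · exact absurd rfl hrs
    rcases hars.2 with h3 | h3
    ·
      -- h3 : (e s).1 = (e r).1, hs1 : (e s).1 = (e q).1
      -- so (e r).1 = (e q).1, contradicting? no -- that's the GOAL, but we're in exfalso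
      -- we still must derive False: r ∈ fiber2 of q with fst differing is fine...
      exact hqr (eq_of_coords e (h3 ▸ hs1 : (e r).1 = (e q).1) h1)
    · have : s ∈ ({q, r} : Set G) := by
        rw [← hfib]
        show (e s).2 = (e q).2
        rw [h3, h1]
      rcases this with rfl | rfl
      · exact absurd rfl hqs
      · exact absurd rfl hrs

end Helpers
section RookSide
variable {G : Type u} [Group G] [Fintype G]

lemma rookSide (T : Set G) (hA : AutGSTrivial T) (hAc : AutGSTrivial Tᶜ)
    {X Y : Type u} [Fintype X] [Fintype Y] (e : G ≃ X × Y)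
    (hX2 : Fintype.card X = 2)
    (hm : Fintype.card Y = 2 ∨ Fintype.card Y = 3 ∨ Fintype.card Y = 4)
    (hrook : ∀ u v : G, v ≠ u → (cayAdj T u v ↔ v ∈ Lset e u)) : False := by
  classical
  have hT1 : T \ {1} = Lset e 1 := by
    ext v
    simp only [Set.mem_diff, Set.mem_singleton_iff]
    constructor
    · rintro ⟨hv, hne⟩
      exact (hrook 1 v hne).mp ((cay_one T v).mpr hv)
    · intro hv
      exact ⟨(cay_one T v).mp ((hrook 1 v hv.1).mpr hv), hv.1⟩
  rcases hm with hm2 | hm34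
  · -- m = 2 : IfaceA for Tᶜ
    refine absurd hAc (killA ?_)
    have hTc : Tᶜ \ {1} = Dset e 1 := by
      ext v
      simp only [Set.mem_diff, Set.mem_singleton_iff, Set.mem_compl_iff]
      constructor
      · rintro ⟨hv, hne⟩
        rcases mem_Lset_or e hne with hL | hD
        · exact absurd ((cay_one T v).mp ((hrook 1 v hne).mpr hL)) hv
        · exact hD
      · intro hv
        have hne : v ≠ 1 := fun h => hv.1 (by rw [h])
        refine ⟨fun hvT => ?_, hne⟩
        have := (hrook 1 v hne).mp ((cay_one T v).mpr hvT)
        exact (not_mem_Dset_of_mem_Lset e this) hv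
    have hone : (Dset e 1).ncard = 1 := by
      rw [ncard_Dset, hX2, hm2]
    obtain ⟨t, ht⟩ := Set.ncard_eq_one.mp hone
    have htD : t ∈ Dset e 1 := by rw [ht]; rfl
    have htne : t ≠ 1 := fun h => htD.1 (by rw [h])
    refine ⟨?_, t, htne, ?_, by rw [hTc, ht]⟩
    · rw [card_prod_of_equiv e, hX2, hm2]
    · have h1t : (1:G) ∈ Dset e t := mem_Dset_symm e htD
      have hnotadj : ¬ cayAdj T t 1 := by
        intro hadj
        have := (hrook t 1 (Ne.symm htne)).mp hadj
        exact (not_mem_Dset_of_mem_Lset e this) h1t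
      have hc : cayAdj Tᶜ t 1 := (cayAdj_compl T t 1).mpr hnotadj
      have hti : t⁻¹ ∈ Tᶜ := cay_inv_mem hc
      have htine : t⁻¹ ≠ 1 := fun h => htne (by rwa [inv_eq_one] at h)
      have hmem : t⁻¹ ∈ Tᶜ \ {1} := ⟨hti, htine⟩
      rw [hTc, ht, Set.mem_singleton_iff] at hmem
      calc t * t = t * t⁻¹ := by rw [hmem]
        _ = 1 := mul_inv_cancel t
  · -- m = 3 or 4 : IfaceB for T
    have hm3 : 3 ≤ Fintype.card Y := by omega
    set Rset : Set G := {v : G | (e v).1 = (e 1).1} with hRdef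
    have hRcard : Rset.ncard = Fintype.card Y := ncard_fiber1 e _
    have h1R : (1:G) ∈ Rset := rfl
    have hmul : ∀ a ∈ Rset, ∀ v ∈ Rset, v * a ∈ Rset := by
      intro a ha v hv
      rcases eq_or_ne v 1 with rfl | hv1
      · rwa [one_mul]
      · have hpairsub : ({1, v} : Set G) ⊆ Rset := by
          rintro w (rfl | rfl)
          · exact h1R
          · exact hv
        have hdiffcard : (Rset \ {1, v}).ncard = Fintype.card Y - 2 := by
          rw [Set.ncard_diff hpairsub (Set.toFinite _), Set.ncard_pair (Ne.symm hv1), hRcard]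
        obtain ⟨v', hv'⟩ : (Rset \ ({1, v} : Set G)).Nonempty := by
          apply Set.nonempty_of_ncard_ne_zero
          omega
        have hv'R : v' ∈ Rset := hv'.1
        have hv'1 : v' ≠ 1 := fun h => hv'.2 (Or.inl h)
        have hv'v : v' ≠ v := fun h => hv'.2 (Or.inr h)
        have key : ∀ w ∈ Rset, w ≠ 1 → cayAdj T a (w * a) := by
          intro w hw hw1
          have h0 : cayAdj T 1 w := (hrook 1 w hw1).mpr ⟨hw1, Or.inl hw⟩
          have := (cay_translate T 1 w a).mpr h0
          rwa [one_mul] at this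
        have had1 : cayAdj T a (v * a) := key v hv hv1
        have had2 : cayAdj T a (v' * a) := key v' hv'R hv'1
        have had3 : cayAdj T (v * a) (v' * a) := by
          apply (cay_translate T v v' a).mpr
          exact (hrook v v' hv'v).mpr ⟨hv'v, Or.inl (hv'R.trans hv.symm)⟩
        have hne1 : v * a ≠ a := fun h =>
          hv1 (mul_right_cancel (show v * a = 1 * a by rw [h, one_mul]))
        have hne2 : v' * a ≠ a := fun h =>
          hv'1 (mul_right_cancel (show v' * a = 1 * a by rw [h, one_mul]))
        have hne3 : v' * a ≠ v * a := fun h => hv'v (mul_right_cancel h)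
        have := tripleLemma e hX2 hne1 hne2 hne3
          ((hrook a (v*a) hne1).mp had1)
          ((hrook a (v'*a) hne2).mp had2)
          ((hrook (v*a) (v'*a) hne3).mp had3)
        show (e (v*a)).1 = (e 1).1
        rw [this, ha]
    have hinvmem : ∀ a ∈ Rset, a⁻¹ ∈ Rset := by
      intro a ha
      have hpow : ∀ k : ℕ, a ^ k ∈ Rset := by
        intro k
        induction k with
        | zero => simpa using h1R
        | succ n ih => rw [pow_succ]; exact hmul a ha _ ih
      have ho : 1 ≤ orderOf a := orderOf_pos a
      have hmm : a ^ (orderOf a - 1) * a = 1 := by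
        rw [← pow_succ, Nat.sub_add_cancel ho, pow_orderOf_eq_one]
      have hie : a ^ (orderOf a - 1) = a⁻¹ := eq_inv_of_mul_eq_one_left hmm
      rw [← hie]
      exact hpow _
    let R : Subgroup G :=
      { carrier := Rset
        one_mem' := h1R
        mul_mem' := fun {x y} hx hy => hmul y hy x hx
        inv_mem' := fun {x} hx => hinvmem x hx }
    have hfib2 : ({v : G | (e v).2 = (e 1).2} \ {1}).ncard = 1 := by
      rw [Set.ncard_diff_singleton_of_mem (show (1:G) ∈ {v : G | (e v).2 = (e 1).2} from rfl), ncard_fiber2 e, hX2]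
    obtain ⟨t, ht⟩ := Set.ncard_eq_one.mp hfib2
    have htmem : t ∈ {v : G | (e v).2 = (e 1).2} \ {1} := by rw [ht]; rfl
    have ht2 : (e t).2 = (e 1).2 := htmem.1
    have htne : t ≠ 1 := by simpa using htmem.2
    have htR : t ∉ R := fun h => htne (eq_of_coords e h ht2)
    have hTeq : T \ {1} = ((R : Set G) \ {1}) ∪ {t} := by
      rw [hT1]
      ext v
      simp only [Set.mem_union, Set.mem_diff, Set.mem_singleton_iff, Lset, Set.mem_setOf_eq]
      constructor
      · rintro ⟨hne, h | h⟩
        · exact Or.inl ⟨h, hne⟩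
        · right
          have hmem : v ∈ {w : G | (e w).2 = (e 1).2} \ {1} := ⟨h, by simpa using hne⟩
          rw [ht, Set.mem_singleton_iff] at hmem
          exact hmem
      · rintro (⟨hR, hne⟩ | rfl)
        · exact ⟨hne, Or.inl hR⟩
        · exact ⟨htne, Or.inr ht2⟩
    have htt : t * t = 1 := by
      have hadj : cayAdj T t 1 := (hrook t 1 (Ne.symm htne)).mpr ⟨Ne.symm htne, Or.inr ht2.symm⟩
      have hti : t⁻¹ ∈ T := cay_inv_mem hadj
      have htine : t⁻¹ ≠ 1 := fun h => htne (by rwa [inv_eq_one] at h)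
      have hmem : t⁻¹ ∈ ((R : Set G) \ {1}) ∪ {t} := by
        rw [← hTeq]; exact ⟨hti, htine⟩
      rcases hmem with ⟨hmem, _⟩ | heq
      · exact absurd (by simpa using R.inv_mem hmem) htR
      · rw [Set.mem_singleton_iff] at heq
        calc t * t = t * t⁻¹ := by rw [heq]
          _ = 1 := mul_inv_cancel t
    refine absurd hA (killB ⟨R, t, ?_, ?_, htR, htt, hTeq⟩)
    · show Rset.ncard = 3 ∨ Rset.ncard = 4
      rw [hRcard]; exact hm34
    · show Fintype.card G = 2 * Rset.ncard
      rw [hRcard, card_prod_of_equiv e, hX2]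

end RookSide
section Tight
variable {G : Type u} [Group G] [Fintype G]

attribute [instance] Dec.fX Dec.fY

lemma dsub {T : Set G} (D1 : Dec (cayAdj T)) (D2 : Dec (cayAdj Tᶜ)) (u : G) :
    Dset D1.e u ⊆ Lset D2.e u := by
  intro v hv
  have hne : v ≠ u := fun h => hv.1 (by rw [h])
  have h1 : ¬ cayAdj T u v := D1.not_adj hv
  have h2 : cayAdj Tᶜ u v := (cayAdj_compl T u v).mpr h1
  exact D2.mem_Lset_of_adj hne h2

lemma dsub' {T : Set G} (D1 : Dec (cayAdj T)) (D2 : Dec (cayAdj Tᶜ)) (u : G) :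
    Dset D2.e u ⊆ Lset D1.e u := by
  intro v hv
  have hne : v ≠ u := fun h => hv.1 (by rw [h])
  have h1 : ¬ cayAdj Tᶜ u v := D2.not_adj hv
  have h2 : cayAdj T u v := by rwa [cayAdj_compl, not_not] at h1
  exact D1.mem_Lset_of_adj hne h2

lemma tight9 {T : Set G} (hA : AutGSTrivial T)
    (D1 : Dec (cayAdj T)) (D2 : Dec (cayAdj Tᶜ))
    (ha : Fintype.card D1.X = 3) (hb : Fintype.card D1.Y = 3)
    (hc : Fintype.card D2.X = 3) (hd : Fintype.card D2.Y = 3) : False := by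
  refine absurd hA (killC ⟨?_, ?_⟩)
  · rw [card_prod_of_equiv D1.e, ha, hb]
  · -- inverse-closed
    have htight : ∀ u, Dset D2.e u = Lset D1.e u := by
      intro u
      apply Set.eq_of_subset_of_ncard_le (dsub' D1 D2 u)
      rw [ncard_Dset, ncard_Lset, ha, hb, hc, hd]
    intro s hs
    rcases eq_or_ne s 1 with rfl | hne
    · simpa using hs
    · have hadj1 : cayAdj T 1 s := (cay_one T s).mpr hs
      rcases mem_Lset_or D1.e hne with hL | hD
      · have hsD : s ∈ Dset D2.e 1 := by rw [htight 1]; exact hL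
        have h1s : 1 ∈ Dset D2.e s := mem_Dset_symm D2.e hsD
        have hadj : cayAdj T s 1 := D2.adj_of_mem_Dset h1s
        exact cay_inv_mem hadj
      · exact absurd hadj1 (D1.not_adj hD)

lemma tight12 {T : Set G} (D1 : Dec (cayAdj T)) (D2 : Dec (cayAdj Tᶜ))
    (ha : Fintype.card D1.X = 2) (hb : Fintype.card D1.Y = 6)
    (hc : Fintype.card D2.X = 3) (hd : Fintype.card D2.Y = 4) : False := by
  have htight : ∀ u, Lset D2.e u = Dset D1.e u := by
    intro u
    symm
    apply Set.eq_of_subset_of_ncard_le (dsub D1 D2 u)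
    rw [ncard_Dset, ncard_Lset, ha, hb, hc, hd]
  set F : Set G := {v : G | (D2.e v).1 = (D2.e 1).1} with hF
  have hFcard : F.ncard = 4 := by rw [ncard_fiber1 D2.e, hd]
  have hinj : Set.InjOn (fun v => (D1.e v).1) F := by
    intro v hv v' hv' heq
    by_contra hne
    have hL : v' ∈ Lset D2.e v := ⟨Ne.symm hne, Or.inl (hv'.trans hv.symm)⟩
    rw [htight v] at hL
    exact hL.1 heq.symm
  have himg : ((fun v => (D1.e v).1) '' F).ncard = 4 := by
    rw [Set.ncard_image_of_injOn hinj, hFcard]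
  have hle : ((fun v => (D1.e v).1) '' F).ncard ≤ 2 := by
    have h1 := Set.ncard_le_ncard (Set.subset_univ ((fun v => (D1.e v).1) '' F))
      (Set.toFinite _)
    rwa [Set.ncard_univ, Nat.card_eq_fintype_card, ha] at h1
  omega

end Tight
section CaseI
variable {G : Type u} [Group G] [Fintype G]

lemma caseI {T : Set G} (hA : AutGSTrivial T) (hAc : AutGSTrivial Tᶜ)
    (D1 : Dec (cayAdj T)) (D2 : Dec (cayAdj Tᶜ))
    (hX1 : Fintype.card D1.X = 2) (hX2 : Fintype.card D2.X = 2)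
    (hbd : Fintype.card D1.Y = Fintype.card D2.Y) : False := by
  classical
  set m := Fintype.card D1.Y with hm
  have hm2 : 2 ≤ m := D1.hY
  have hsplit : ∀ u : G, (Lset D2.e u \ Dset D1.e u).ncard = 1 := by
    intro u
    rw [Set.ncard_diff (dsub D1 D2 u) (Set.toFinite _), ncard_Dset, ncard_Lset,
      hX1, hX2, ← hbd, ← hm]
    omega
  choose p hp using fun u => Set.ncard_eq_one.mp (hsplit u)
  have hpmem : ∀ u, p u ∈ Lset D2.e u \ Dset D1.e u := fun u => by rw [hp u]; rfl
  have hpne : ∀ u, p u ≠ u := fun u => (hpmem u).1.1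
  have hpL2 : ∀ u, p u ∈ Lset D2.e u := fun u => (hpmem u).1
  have hpchar : ∀ u v, v ∈ Lset D2.e u → v ∉ Dset D1.e u → v = p u := by
    intro u v h1 h2
    have : v ∈ Lset D2.e u \ Dset D1.e u := ⟨h1, h2⟩
    rw [hp u] at this
    exact this
  have hOUTsub : ∀ u, {v : G | v ≠ u ∧ cayAdj T u v} ⊆ Dset D2.e u ∪ {p u} := by
    rintro u v ⟨hne, hadj⟩
    have hL1 : v ∈ Lset D1.e u := D1.mem_Lset_of_adj hne hadj
    rcases mem_Lset_or D2.e hne with h2 | h2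
    · exact Or.inr (hpchar u v h2 (not_mem_Dset_of_mem_Lset D1.e hL1))
    · exact Or.inl h2
  have hOUTsup : ∀ u, Dset D2.e u ⊆ {v : G | v ≠ u ∧ cayAdj T u v} := by
    intro u v hv
    exact ⟨fun h => hv.1 (by rw [h]), D2.adj_of_mem_Dset hv⟩
  have hINsub : ∀ u, {v : G | v ≠ u ∧ cayAdj T v u} ⊆ Dset D2.e u ∪ {p u} := by
    rintro u v ⟨hne, hadj⟩
    have hL1 : v ∈ Lset D1.e u := D1.mem_Lset_of_adj' hne hadj
    rcases mem_Lset_or D2.e hne with h2 | h2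
    · exact Or.inr (hpchar u v h2 (not_mem_Dset_of_mem_Lset D1.e hL1))
    · exact Or.inl h2
  have hINsup : ∀ u, Dset D2.e u ⊆ {v : G | v ≠ u ∧ cayAdj T v u} := by
    intro u v hv
    refine ⟨fun h => hv.1 (by rw [h]), ?_⟩
    exact D2.adj_of_mem_Dset (mem_Dset_symm D2.e hv)
  have hDcard : ∀ u, (Dset D2.e u).ncard = m - 1 := by
    intro u
    rw [ncard_Dset, hX2, ← hbd]
    omega
  have hpnotD : ∀ u, p u ∉ Dset D2.e u := fun u => not_mem_Dset_of_mem_Lset D2.e (hpL2 u)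
  have hbitout : ∀ u, (cayAdj T u (p u) ↔ (T \ {1}).ncard = m) := by
    intro u
    constructor
    · intro hadj
      have hset : {v : G | v ≠ u ∧ cayAdj T u v} = Dset D2.e u ∪ {p u} := by
        apply Set.Subset.antisymm (hOUTsub u)
        intro v hv
        rcases hv with hv | hv
        · exact hOUTsup u hv
        · rw [Set.mem_singleton_iff] at hv
          rw [hv]
          exact ⟨hpne u, hadj⟩
      have hod := outdeg T u
      rw [hset, Set.ncard_union_eq (by rw [Set.disjoint_singleton_right]; exact hpnotD u)
        (Set.toFinite _) (Set.toFinite _), hDcard u, Set.ncard_singleton] at hod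
      omega
    · intro hcard
      by_contra hnadj
      have hset : {v : G | v ≠ u ∧ cayAdj T u v} = Dset D2.e u := by
        apply Set.Subset.antisymm ?_ (hOUTsup u)
        intro v hv
        rcases hOUTsub u hv with h | h
        · exact h
        · rw [Set.mem_singleton_iff] at h
          rw [h] at hv
          exact absurd hv.2 hnadj
      have hod := outdeg T u
      rw [hset, hDcard u] at hod
      omega
  have hbitin : ∀ u, (cayAdj T (p u) u ↔ (T \ {1}).ncard = m) := by
    intro u
    constructor
    · intro hadj
      have hset : {v : G | v ≠ u ∧ cayAdj T v u} = Dset D2.e u ∪ {p u} := by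
        apply Set.Subset.antisymm (hINsub u)
        intro v hv
        rcases hv with hv | hv
        · exact hINsup u hv
        · rw [Set.mem_singleton_iff] at hv
          rw [hv]
          exact ⟨hpne u, hadj⟩
      have hid := indeg T u
      rw [hset, Set.ncard_union_eq (by rw [Set.disjoint_singleton_right]; exact hpnotD u)
        (Set.toFinite _) (Set.toFinite _), hDcard u, Set.ncard_singleton] at hid
      omega
    · intro hcard
      by_contra hnadj
      have hset : {v : G | v ≠ u ∧ cayAdj T v u} = Dset D2.e u := by
        apply Set.Subset.antisymm ?_ (hINsup u)
        intro v hv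
        rcases hINsub u hv with h | h
        · exact h
        · rw [Set.mem_singleton_iff] at h
          rw [h] at hv
          exact absurd hv.2 hnadj
      have hid := indeg T u
      rw [hset, hDcard u] at hid
      omega
  -- m ≤ 4
  have hm4 : m ≤ 4 := by
    rcases le_or_gt m 2 with h | hgt
    · omega
    · have hAcard : ∀ u : G,
          m - 2 ≤ (Dset D1.e u ∩ {v : G | (D2.e v).1 = (D2.e u).1}).ncard := by
        intro u
        have hsplit2 : Dset D1.e u ⊆
            (Dset D1.e u ∩ {v : G | (D2.e v).1 = (D2.e u).1}) ∪
              ({v : G | (D2.e v).2 = (D2.e u).2} \ {u}) := by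
          intro v hv
          rcases (dsub D1 D2 u hv).2 with h1 | h1
          · exact Or.inl ⟨hv, h1⟩
          · exact Or.inr ⟨h1, fun hh => hv.1 (by rw [Set.mem_singleton_iff.mp hh])⟩
        have hle := Set.ncard_le_ncard hsplit2 (Set.toFinite _)
        have hun := Set.ncard_union_le
          (Dset D1.e u ∩ {v : G | (D2.e v).1 = (D2.e u).1})
          ({v : G | (D2.e v).2 = (D2.e u).2} \ {u})
        have hz : ({v : G | (D2.e v).2 = (D2.e u).2} \ {u}).ncard = 1 := by
          rw [Set.ncard_diff_singleton_of_mem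
            (show u ∈ {v : G | (D2.e v).2 = (D2.e u).2} from rfl),
            ncard_fiber2 D2.e, hX2]
        have hD1c : (Dset D1.e u).ncard = m - 1 := by
          rw [ncard_Dset, hX1]
          omega
        omega
      obtain ⟨v, hv⟩ : (Dset D1.e 1 ∩ {w : G | (D2.e w).1 = (D2.e 1).1}).Nonempty := by
        apply Set.nonempty_of_ncard_ne_zero
        have := hAcard 1
        omega
      set F : Set G := {w : G | (D2.e w).1 = (D2.e 1).1} with hF
      have hFcard : F.ncard = m := by rw [hF, ncard_fiber1 D2.e, ← hbd]
      set P := F ∩ {w : G | (D1.e w).1 = (D1.e 1).1} with hPdef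
      set Q := F ∩ {w : G | (D1.e w).1 ≠ (D1.e 1).1} with hQdef
      have hPQ : F = P ∪ Q := by
        ext w
        by_cases hw : (D1.e w).1 = (D1.e 1).1
        · simp [hPdef, hQdef, hw]
        · simp [hPdef, hQdef, hw]
      have hdisj : Disjoint P Q := by
        rw [Set.disjoint_left]
        rintro w ⟨_, h1⟩ ⟨_, h2⟩
        exact h2 h1
      have hQ : m - 2 ≤ Q.ncard := by
        have hsub : Dset D1.e 1 ∩ {w : G | (D2.e w).1 = (D2.e 1).1} ⊆ Q := by
          rintro w ⟨hw1, hw2⟩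
          exact ⟨hw2, hw1.1⟩
        exact le_trans (hAcard 1) (Set.ncard_le_ncard hsub (Set.toFinite _))
      have hP : m - 2 ≤ P.ncard := by
        have hsub : Dset D1.e v ∩ {w : G | (D2.e w).1 = (D2.e v).1} ⊆ P := by
          rintro w ⟨hw1, hw2⟩
          constructor
          · show (D2.e w).1 = (D2.e 1).1
            rw [hw2, hv.2]
          · show (D1.e w).1 = (D1.e 1).1
            exact twoElt hX1 hv.1.1 hw1.1
        exact le_trans (hAcard v) (Set.ncard_le_ncard hsub (Set.toFinite _))
      have huni := Set.ncard_union_eq hdisj (Set.toFinite _) (Set.toFinite _)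
      rw [← hPQ] at huni
      omega
  -- dichotomy on the ε bit
  by_cases heps : (T \ {1}).ncard = m
  · refine rookSide T hA hAc D1.e hX1 (by omega) ?_
    intro u v hne
    constructor
    · exact fun h => D1.mem_Lset_of_adj hne h
    · intro hL
      rcases mem_Lset_or D2.e hne with h2 | h2
      · have hveq : v = p u := hpchar u v h2 (not_mem_Dset_of_mem_Lset D1.e hL)
        rw [hveq]
        exact (hbitout u).mpr heps
      · exact D2.adj_of_mem_Dset h2
  · refine rookSide Tᶜ hAc (by rwa [compl_compl]) D2.e hX2 (by omega) ?_
    intro u v hne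
    constructor
    · exact fun h => D2.mem_Lset_of_adj hne h
    · intro hL
      rw [cayAdj_compl]
      rcases mem_Lset_or D1.e hne with h1 | h1
      · have hveq : v = p u := hpchar u v hL (not_mem_Dset_of_mem_Lset D1.e h1)
        rw [hveq]
        intro hadj
        exact heps ((hbitout u).mp hadj)
      · exact D1.not_adj h1

end CaseI
section DiscDec
variable {G : Type u} [Group G] [Fintype G]

lemma discdec_core {T : Set G} (hA : AutGSTrivial T)
    (P : Set G) (h1P : (1:G) ∈ P) (hPne : Pᶜ.Nonempty)
    (hcl : ∀ u ∈ P, ∀ v : G, (cayAdj T u v ∨ cayAdj T v u) → v ∈ P)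
    (D2 : Dec (cayAdj Tᶜ)) (hc2 : Fintype.card D2.X = 2) : False := by
  classical
  set d := Fintype.card D2.Y with hd
  have hd2 : 2 ≤ d := D2.hY
  have hcross : ∀ u ∈ P, ∀ w ∈ Pᶜ, w ∈ Lset D2.e u := by
    intro u hu w hw
    have hne : w ≠ u := fun h => hw (h ▸ hu)
    have hnadj : ¬ cayAdj T u w := fun h => hw (hcl u hu w (Or.inl h))
    exact D2.mem_Lset_of_adj hne ((cayAdj_compl T u w).mpr hnadj)
  have hcrossB : ∀ u ∈ P, ∀ w ∈ Pᶜ, u ∈ Lset D2.e w := by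
    intro u hu w hw
    have hne : u ≠ w := fun h => hw (h ▸ hu)
    have hnadj : ¬ cayAdj T u w := fun h => hw (hcl u hu w (Or.inl h))
    exact D2.mem_Lset_of_adj' hne ((cayAdj_compl T u w).mpr hnadj)
  have hL : ∀ u : G, (Lset D2.e u).ncard = d := by
    intro u
    rw [ncard_Lset, hc2]
    omega
  have hQle : Pᶜ.ncard ≤ d := by
    have hsub : Pᶜ ⊆ Lset D2.e 1 := fun w hw => hcross 1 h1P w hw
    have h := Set.ncard_le_ncard hsub (Set.toFinite _)
    rwa [hL] at h
  have hPle : P.ncard ≤ d := by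
    obtain ⟨q, hq⟩ := hPne
    have hsub : P ⊆ Lset D2.e q := fun u hu => hcrossB u hu q hq
    have h := Set.ncard_le_ncard hsub (Set.toFinite _)
    rwa [hL] at h
  have hsum : P.ncard + Pᶜ.ncard = Fintype.card G := by
    rw [← Nat.card_eq_fintype_card]
    exact Set.ncard_add_ncard_compl _
  have hcardG : Fintype.card G = 2 * d := by
    rw [card_prod_of_equiv D2.e, hc2]
  have hQeq : ∀ u ∈ P, Lset D2.e u = Pᶜ := by
    intro u hu
    symm
    apply Set.eq_of_subset_of_ncard_le (fun w hw => hcross u hu w hw)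
    rw [hL]
    omega
  have hPeq : ∀ w ∈ Pᶜ, Lset D2.e w = P := by
    intro w hw
    symm
    apply Set.eq_of_subset_of_ncard_le (fun u hu => hcrossB u hu w hw)
    rw [hL]
    omega
  rcases Nat.lt_or_ge d 3 with hd3 | hd3
  · -- d = 2 : IfaceA for T
    have hd2e : d = 2 := by omega
    have hTsub : T \ {1} ⊆ P \ {1} := by
      rintro s ⟨hs, hs1⟩
      exact ⟨hcl 1 h1P s (Or.inl ((cay_one T s).mpr hs)), hs1⟩
    have hPcard : P.ncard = 2 := by omega
    obtain ⟨x, y, hxy, hPxy⟩ := Set.ncard_eq_two.mp hPcard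
    have h1mem : (1:G) ∈ ({x, y} : Set G) := hPxy ▸ h1P
    obtain ⟨t, htne, hPt⟩ : ∃ t : G, t ≠ 1 ∧ P \ {1} = {t} := by
      rcases h1mem with h | h
      · -- 1 = x
        refine ⟨y, fun hy => hxy ?_, ?_⟩
        · rw [hy, ← h]
        · rw [hPxy, ← h]
          ext w
          simp only [Set.mem_diff, Set.mem_insert_iff, Set.mem_singleton_iff]
          constructor
          · rintro ⟨rfl | rfl, hw⟩
            · exact absurd rfl hw
            · rfl
          · rintro rfl
            exact ⟨Or.inr rfl, fun hy => hxy (by rw [hy, ← h])⟩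
      · -- 1 = y
        refine ⟨x, fun hx => hxy ?_, ?_⟩
        · rw [hx, ← h]
        · rw [hPxy, ← h]
          ext w
          simp only [Set.mem_diff, Set.mem_insert_iff, Set.mem_singleton_iff]
          constructor
          · rintro ⟨rfl | rfl, hw⟩
            · rfl
            · exact absurd rfl hw
          · rintro rfl
            exact ⟨Or.inl rfl, fun hx => hxy (by rw [hx, ← h])⟩
    have hTne : (T \ {1}).Nonempty := by
      rw [Set.nonempty_iff_ne_empty]
      intro hemp
      obtain ⟨x1, x2, hx12⟩ := Fintype.exists_pair_of_one_lt_card (by omega : 1 < Fintype.card D2.X)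
      obtain ⟨y1, y2, hy12⟩ := Fintype.exists_pair_of_one_lt_card (by omega : 1 < Fintype.card D2.Y)
      set u := D2.e.symm (x1, y1)
      set v := D2.e.symm (x2, y2)
      have huv : v ≠ u := by
        intro h
        apply hx12
        have := congrArg (fun w => (D2.e w).1) h
        simpa [u, v] using this.symm
      have hD : v ∈ Dset D2.e u := by
        constructor
        · show (D2.e v).1 ≠ (D2.e u).1
          simp only [u, v, Equiv.apply_symm_apply]
          exact fun h => hx12 h.symm
        · show (D2.e v).2 ≠ (D2.e u).2
          simp only [u, v, Equiv.apply_symm_apply]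
          exact fun h => hy12 h.symm
      apply D2.not_adj hD
      rw [cayAdj_iff]
      intro hmem
      have : v * u⁻¹ ∈ T \ {1} := ⟨hmem, by
        simp only [Set.mem_singleton_iff, mul_inv_eq_one]
        exact huv⟩
      rw [hemp] at this
      exact this
    obtain ⟨s0, hs0⟩ := hTne
    have hTeq : T \ {1} = {t} := by
      apply Set.Subset.antisymm (fun w hw => by rw [← hPt]; exact hTsub hw)
      intro w hw
      rw [Set.mem_singleton_iff] at hw
      subst hw
      have := hTsub hs0
      rw [hPt, Set.mem_singleton_iff] at this
      rwa [← this]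
    -- t * t = 1 via in-degree
    have htt : t * t = 1 := by
      have hINsub : {v : G | v ≠ 1 ∧ cayAdj T v 1} ⊆ P \ {1} := by
        rintro v ⟨hne, hadj⟩
        exact ⟨hcl 1 h1P v (Or.inr hadj), hne⟩
      have hINcard : {v : G | v ≠ 1 ∧ cayAdj T v 1}.ncard = 1 := by
        rw [indeg, hTeq, Set.ncard_singleton]
      obtain ⟨v0, hv0⟩ := Set.ncard_eq_one.mp hINcard
      have hv0mem : v0 ∈ {v : G | v ≠ 1 ∧ cayAdj T v 1} := by rw [hv0]; rfl
      have hv0t : v0 = t := by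
        have := hINsub hv0mem
        rw [hPt, Set.mem_singleton_iff] at this
        exact this
      have hadj : cayAdj T t 1 := hv0t ▸ hv0mem.2
      have hti : t⁻¹ ∈ T := cay_inv_mem hadj
      have htine : t⁻¹ ≠ 1 := fun h => htne (by rwa [inv_eq_one] at h)
      have hmem : t⁻¹ ∈ T \ {1} := ⟨hti, htine⟩
      rw [hTeq, Set.mem_singleton_iff] at hmem
      calc t * t = t * t⁻¹ := by rw [hmem]
        _ = 1 := mul_inv_cancel t
    exact absurd hA (killA ⟨by omega, t, htne, htt, hTeq⟩)
  · -- d ≥ 3 : contradiction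
    have hFsub : {v : G | (D2.e v).1 = (D2.e 1).1} \ {1} ⊆ Pᶜ := by
      intro w hw
      have hwne : w ≠ 1 := hw.2
      have hwL : w ∈ Lset D2.e 1 := ⟨hwne, Or.inl hw.1⟩
      rw [hQeq 1 h1P] at hwL
      exact hwL
    have hFcard : ({v : G | (D2.e v).1 = (D2.e 1).1} \ {1}).ncard = d - 1 := by
      rw [Set.ncard_diff_singleton_of_mem
        (show (1:G) ∈ {v : G | (D2.e v).1 = (D2.e 1).1} from rfl),
        ncard_fiber1 D2.e]
    obtain ⟨v, hv, v', hv', hvv'⟩ :=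
      (Set.one_lt_ncard (Set.toFinite _)).mp (by omega : 1 < ({v : G | (D2.e v).1 = (D2.e 1).1} \ {1}).ncard)
    have hvP : v ∈ Pᶜ := hFsub hv
    have hv'P : v' ∈ Pᶜ := hFsub hv'
    have hv'L : v' ∈ Lset D2.e v := by
      have e1 : (D2.e v').1 = (D2.e 1).1 := hv'.1
      have e2 : (D2.e v).1 = (D2.e 1).1 := hv.1
      exact ⟨Ne.symm hvv', Or.inl (e1.trans e2.symm)⟩
    rw [hPeq v hvP] at hv'L
    exact hv'P hv'L

lemma discdec {T : Set G} (hA : AutGSTrivial T) (hAc : AutGSTrivial Tᶜ)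
    (hdisc : ¬ WeaklyConnected (cayAdj T)) (D2 : Dec (cayAdj Tᶜ)) : False := by
  obtain ⟨P0, hP0ne, hP0cne, hcl0⟩ := exists_component hdisc
  have key : ∀ P : Set G, (1:G) ∈ P → Pᶜ.Nonempty →
      (∀ u ∈ P, ∀ v : G, (cayAdj T u v ∨ cayAdj T v u) → v ∈ P) → False := by
    intro P h1P hPne hcl
    -- first derive that one of the sides of the grid has two elements
    have hcross : ∀ u ∈ P, ∀ w ∈ Pᶜ, w ∈ Lset D2.e u := by
      intro u hu w hw
      have hne : w ≠ u := fun h => hw (h ▸ hu)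
      have hnadj : ¬ cayAdj T u w := fun h => hw (hcl u hu w (Or.inl h))
      exact D2.mem_Lset_of_adj hne ((cayAdj_compl T u w).mpr hnadj)
    have hcrossB : ∀ u ∈ P, ∀ w ∈ Pᶜ, u ∈ Lset D2.e w := by
      intro u hu w hw
      have hne : u ≠ w := fun h => hw (h ▸ hu)
      have hnadj : ¬ cayAdj T u w := fun h => hw (hcl u hu w (Or.inl h))
      exact D2.mem_Lset_of_adj' hne ((cayAdj_compl T u w).mpr hnadj)
    have hL : ∀ u : G, (Lset D2.e u).ncard =
        (Fintype.card D2.Y - 1) + (Fintype.card D2.X - 1) := fun u => ncard_Lset D2.e u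
    have hQle : Pᶜ.ncard ≤ (Fintype.card D2.Y - 1) + (Fintype.card D2.X - 1) := by
      have hsub : Pᶜ ⊆ Lset D2.e 1 := fun w hw => hcross 1 h1P w hw
      have h := Set.ncard_le_ncard hsub (Set.toFinite _)
      rwa [hL] at h
    have hPle : P.ncard ≤ (Fintype.card D2.Y - 1) + (Fintype.card D2.X - 1) := by
      obtain ⟨q, hq⟩ := hPne
      have hsub : P ⊆ Lset D2.e q := fun u hu => hcrossB u hu q hq
      have h := Set.ncard_le_ncard hsub (Set.toFinite _)
      rwa [hL] at h
    have hsum : P.ncard + Pᶜ.ncard = Fintype.card G := by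
      rw [← Nat.card_eq_fintype_card]
      exact Set.ncard_add_ncard_compl _
    have hcardG : Fintype.card G = Fintype.card D2.X * Fintype.card D2.Y :=
      card_prod_of_equiv D2.e
    have hor : Fintype.card D2.X = 2 ∨ Fintype.card D2.Y = 2 := by
      by_contra hno
      push_neg at hno
      have hc3 : 3 ≤ Fintype.card D2.X := by
        have := D2.hX
        omega
      have hd3 : 3 ≤ Fintype.card D2.Y := by
        have := D2.hY
        omega
      obtain ⟨c', hc'⟩ : ∃ c', Fintype.card D2.X = c' + 3 := ⟨Fintype.card D2.X - 3, by omega⟩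
      obtain ⟨d', hd'⟩ : ∃ d', Fintype.card D2.Y = d' + 3 := ⟨Fintype.card D2.Y - 3, by omega⟩
      rw [hc', hd'] at hcardG hQle hPle
      have hexp : (c' + 3) * (d' + 3) = c'*d' + 3*c' + 3*d' + 9 := by ring
      rw [hexp] at hcardG
      have : 0 ≤ c'*d' := Nat.zero_le _
      omega
    rcases hor with hc | hdd
    · exact discdec_core hA P h1P hPne hcl D2 hc
    · exact discdec_core hA P h1P hPne hcl D2.swap hdd
  by_cases h1 : (1:G) ∈ P0
  · exact key P0 h1 hP0cne hcl0
  · refine key P0ᶜ h1 (by rwa [compl_compl]) ?_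
    intro u hu v hv hvP
    exact hu (hcl0 v hvP u (Or.symm hv))

end DiscDec
section Final
variable {G : Type u} [Group G] [Fintype G]

lemma decdec_aux {T : Set G} (hA : AutGSTrivial T) (hAc : AutGSTrivial Tᶜ)
    (D1 : Dec (cayAdj T)) (D2 : Dec (cayAdj Tᶜ))
    (hab : Fintype.card D1.X ≤ Fintype.card D1.Y)
    (hcd : Fintype.card D2.X ≤ Fintype.card D2.Y) : False := by
  have h1 : (Fintype.card D1.X - 1) * (Fintype.card D1.Y - 1) ≤
      (Fintype.card D2.Y - 1) + (Fintype.card D2.X - 1) := by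
    have hsub := Set.ncard_le_ncard (dsub D1 D2 1) (Set.toFinite _)
    rwa [ncard_Dset, ncard_Lset] at hsub
  have h2 : (Fintype.card D2.X - 1) * (Fintype.card D2.Y - 1) ≤
      (Fintype.card D1.Y - 1) + (Fintype.card D1.X - 1) := by
    have hsub := Set.ncard_le_ncard (dsub' D1 D2 1) (Set.toFinite _)
    rwa [ncard_Dset, ncard_Lset] at hsub
  have hcard1 : Fintype.card G = Fintype.card D1.X * Fintype.card D1.Y :=
    card_prod_of_equiv D1.e
  have hcard2 : Fintype.card G = Fintype.card D2.X * Fintype.card D2.Y :=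
    card_prod_of_equiv D2.e
  rcases arith_red D1.hX D1.hY D2.hX D2.hY hab hcd (by linarith) (by linarith) (by linarith)
    with hca | hc9 | hc12 | hc12'
  · exact caseI hA hAc D1 D2 hca.1 hca.2.1 (by omega)
  · exact tight9 hA D1 D2 hc9.1 hc9.2.1 hc9.2.2.1 hc9.2.2.2
  · exact tight12 D1 D2 hc12.1 hc12.2.1 hc12.2.2.1 hc12.2.2.2
  · exact tight12 (T := Tᶜ) D2
      (D1.congr (fun v w => by rw [compl_compl]))
      hc12'.2.2.1 hc12'.2.2.2 hc12'.1 hc12'.2.1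

lemma decdec {T : Set G} (hA : AutGSTrivial T) (hAc : AutGSTrivial Tᶜ)
    (D1 : Dec (cayAdj T)) (D2 : Dec (cayAdj Tᶜ)) : False := by
  rcases le_total (Fintype.card D1.X) (Fintype.card D1.Y) with h1 | h1 <;>
    rcases le_total (Fintype.card D2.X) (Fintype.card D2.Y) with h2 | h2
  · exact decdec_aux hA hAc D1 D2 h1 h2
  · exact decdec_aux hA hAc D1 D2.swap h1 h2
  · exact decdec_aux hA hAc D1.swap D2 h1 h2
  · exact decdec_aux hA hAc D1.swap D2.swap h1 h2

lemma core (S : Set G) (hnt : Nontrivial G) (hA : AutGSTrivial S)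
    (h1 : ¬(WeaklyConnected (cayAdj S) ∧ IsPrimeDigraph (cayAdj S)))
    (h2 : ¬(WeaklyConnected (cayAdj Sᶜ) ∧ IsPrimeDigraph (cayAdj Sᶜ))) : False := by
  have hAc := autGSTrivial_compl hA
  have hpair : ∃ x y : G, x ≠ y := by
    obtain ⟨x, y, h⟩ := exists_pair_ne G
    exact ⟨x, y, h⟩
  have hcompl : ∀ u v : G, cayAdj Sᶜ u v ↔ ¬ cayAdj S u v := cayAdj_compl S
  rcases not_and_or.mp h1 with hd1 | hp1 <;> rcases not_and_or.mp h2 with hd2 | hp2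
  · exact not_both_disc hcompl hd1 hd2
  · obtain ⟨D2⟩ := dec_of_not_prime hpair hp2
    exact discdec hA hAc hd1 D2
  · obtain ⟨D1⟩ := dec_of_not_prime hpair hp1
    have hA' : AutGSTrivial Sᶜᶜ := by rwa [compl_compl]
    exact discdec hAc hA' hd2 (D1.congr (fun v w => by rw [compl_compl]))
  · obtain ⟨D1⟩ := dec_of_not_prime hpair hp1
    obtain ⟨D2⟩ := dec_of_not_prime hpair hp2
    exact decdec hA hAc D1 D2

end Final
-- MORE

/-- If a finite group `G` is not DRR-detecting, then some Cayley
digraph witnessing this is weakly connected and prime with respect to the cartesian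
product; likewise for GRR-detecting with a Cayley graph witness. -/
theorem exists_prime_connected_witness {G : Type*} [Group G] [Fintype G] :
    (¬ DRRDetecting G →
      ∃ S : Set G, (AutGSTrivial S ∧ ¬ IsDRR G (cayAdj S)) ∧
        WeaklyConnected (cayAdj S) ∧ IsPrimeDigraph (cayAdj S)) ∧
    (¬ GRRDetecting G →
      ∃ S : Set G, (∀ s ∈ S, s⁻¹ ∈ S) ∧ (AutGSTrivial S ∧ ¬ IsGRR G (cayAdj S)) ∧
        WeaklyConnected (cayAdj S) ∧ IsPrimeDigraph (cayAdj S)) := by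
  constructor
  · intro hnd
    unfold DRRDetecting at hnd
    push_neg at hnd
    obtain ⟨S, hAut, hnDRR⟩ := hnd
    have hnt : Nontrivial G := nontrivial_of_not_isDRR hnDRR
    by_cases hgood : WeaklyConnected (cayAdj S) ∧ IsPrimeDigraph (cayAdj S)
    · exact ⟨S, ⟨hAut, hnDRR⟩, hgood.1, hgood.2⟩
    · by_cases hgoodc : WeaklyConnected (cayAdj Sᶜ) ∧ IsPrimeDigraph (cayAdj Sᶜ)
      · refine ⟨Sᶜ, ⟨autGSTrivial_compl hAut, ?_⟩, hgoodc.1, hgoodc.2⟩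
        rw [isDRR_compl]
        exact hnDRR
      · exact absurd (core S hnt hAut hgood hgoodc) not_false
  · intro hng
    unfold GRRDetecting at hng
    push_neg at hng
    obtain ⟨S, hSinv, hAut, hnGRR⟩ := hng
    have hnDRR : ¬ IsDRR G (cayAdj S) := fun h => hnGRR ⟨symmetric_cayAdj hSinv, h⟩
    have hnt : Nontrivial G := nontrivial_of_not_isDRR hnDRR
    have hScinv : ∀ s ∈ Sᶜ, s⁻¹ ∈ Sᶜ := by
      intro s hs hmem
      exact hs (by simpa using hSinv s⁻¹ hmem)
    by_cases hgood : WeaklyConnected (cayAdj S) ∧ IsPrimeDigraph (cayAdj S)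
    · exact ⟨S, hSinv, ⟨hAut, hnGRR⟩, hgood.1, hgood.2⟩
    · by_cases hgoodc : WeaklyConnected (cayAdj Sᶜ) ∧ IsPrimeDigraph (cayAdj Sᶜ)
      · refine ⟨Sᶜ, hScinv, ⟨autGSTrivial_compl hAut, ?_⟩, hgoodc.1, hgoodc.2⟩
        intro hGRR
        exact hnDRR ((isDRR_compl S).mp hGRR.2)
      · exact absurd (core S hnt hAut hgood hgoodc) not_false
end

section
/- Let Q₈ = ⟨i, j, k⟩ be the quaternion group of order 8, let H be a nontrivial finite group of odd order, let S₁ ⊆ H be such that Cay(H, S₁) is a DRR of H, let G = Q₈ × H, and let S = S₁ ∪ {i} ∪ jH ⊆ G (identifying H and Q₈ with their images in G). Then Aut(G, S) = {1} and Cay(G, S) is not a DRR of G; that is, Cay(G,S) witnesses that G is not DRR-detecting. -/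
/-! Common definitions: Cayley digraphs, digraph automorphism groups,
DRRs/GRRs, detecting groups, the regular representation, the group `W(G,N)`,
wreath and cartesian products of digraphs, and the wreath product of groups. -/

universe u

/-! ### Auxiliary material for Statement 18 -/

open QuaternionGroup

/-- The set `S = S₁ ∪ {i} ∪ jH` inside `Q₈ × H`. -/
def bigS {H : Type*} [Group H] (S₁ : Set H) : Set (QuaternionGroup 2 × H) :=
  (fun h : H => ((1 : QuaternionGroup 2), h)) '' S₁ ∪
    {((QuaternionGroup.a 1 : QuaternionGroup 2), (1 : H))} ∪
    {p : QuaternionGroup 2 × H | p.1 = QuaternionGroup.xa 0}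

lemma mem_bigS {H : Type*} [Group H] {S₁ : Set H} {p : QuaternionGroup 2 × H} :
    p ∈ bigS S₁ ↔ (p.1 = 1 ∧ p.2 ∈ S₁) ∨ p = (a 1, 1) ∨ p.1 = xa 0 := by
  unfold bigS
  simp only [Set.mem_union, Set.mem_image, Set.mem_singleton_iff, Set.mem_setOf_eq, or_assoc]
  constructor
  · rintro (⟨h, hh, rfl⟩ | h | h)
    · exact Or.inl ⟨rfl, hh⟩
    · exact Or.inr (Or.inl h)
    · exact Or.inr (Or.inr h)
  · rintro (⟨h1, h2⟩ | h | h)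
    · exact Or.inl ⟨p.2, h2, by rw [← h1]⟩
    · exact Or.inr (Or.inl h)
    · exact Or.inr (Or.inr h)

lemma cay_char {H : Type*} [Group H] {S₁ : Set H} (x y : QuaternionGroup 2 × H) :
    cayAdj (bigS S₁) x y ↔
      (y.1 = x.1 ∧ ∃ s ∈ S₁, y.2 = s * x.2) ∨
      (y.1 = a 1 * x.1 ∧ y.2 = x.2) ∨ y.1 = xa 0 * x.1 := by
  constructor
  · rintro ⟨s, hs, rfl⟩
    rw [mem_bigS] at hs
    rcases hs with ⟨h1, h2⟩ | h | h
    · exact Or.inl ⟨by simp [h1], s.2, h2, rfl⟩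
    · subst h; exact Or.inr (Or.inl ⟨rfl, one_mul _⟩)
    · exact Or.inr (Or.inr (by simp [h]))
  · rintro (⟨h1, s, hs, h2⟩ | ⟨h1, h2⟩ | h1)
    · exact ⟨(1, s), mem_bigS.mpr (Or.inl ⟨rfl, hs⟩), Prod.ext (by simp [h1]) (by simp [h2])⟩
    · exact ⟨(a 1, 1), mem_bigS.mpr (Or.inr (Or.inl rfl)), Prod.ext h1 (by simp [h2])⟩
    · exact ⟨(xa 0, y.2 * x.2⁻¹), mem_bigS.mpr (Or.inr (Or.inr rfl)),
        Prod.ext h1 (by simp)⟩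

/-- The twist function used to build the extra automorphism. -/
def twist {H : Type*} [Group H] (h₀ : H) : QuaternionGroup 2 → H
  | .a _ => 1
  | .xa _ => h₀

lemma twist_a_one_mul {H : Type*} [Group H] (h₀ : H) (q : QuaternionGroup 2) :
    twist h₀ (a 1 * q) = twist h₀ q := by
  cases q with
  | a m => rw [a_mul_a]; rfl
  | xa m => rw [a_mul_xa]; rfl

/-- The twisting permutation of `Q₈ × H`. -/
def twistPerm {H : Type*} [Group H] (h₀ : H) : Equiv.Perm (QuaternionGroup 2 × H) where
  toFun p := (p.1, p.2 * twist h₀ p.1)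
  invFun p := (p.1, p.2 * (twist h₀ p.1)⁻¹)
  left_inv p := by simp [mul_assoc]
  right_inv p := by simp [mul_assoc]

lemma twistPerm_mem {H : Type*} [Group H] (h₀ : H) (S₁ : Set H) :
    twistPerm h₀ ∈ digraphAut (cayAdj (bigS S₁)) := by
  have key : ∀ x y, cayAdj (bigS S₁) (twistPerm h₀ x) (twistPerm h₀ y) ↔
      cayAdj (bigS S₁) x y := by
    intro x y
    simp only [twistPerm, Equiv.coe_fn_mk, cay_char]
    constructor
    · rintro (⟨h1, s, hs, h2⟩ | ⟨h1, h2⟩ | h1)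
      · refine Or.inl ⟨h1, s, hs, ?_⟩
        rw [h1, ← mul_assoc] at h2
        exact mul_right_cancel h2
      · refine Or.inr (Or.inl ⟨h1, ?_⟩)
        rw [h1, twist_a_one_mul] at h2
        exact mul_right_cancel h2
      · exact Or.inr (Or.inr h1)
    · rintro (⟨h1, s, hs, h2⟩ | ⟨h1, h2⟩ | h1)
      · exact Or.inl ⟨h1, s, hs, by rw [h1, h2, mul_assoc]⟩
      · exact Or.inr (Or.inl ⟨h1, by rw [h1, twist_a_one_mul, h2]⟩)
      · exact Or.inr (Or.inr h1)
  exact key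

lemma aut_prod_decomp {H : Type*} [Group H] [Fintype H] (hodd : Odd (Fintype.card H))
    (φ : MulAut (QuaternionGroup 2 × H)) :
    (∀ q : QuaternionGroup 2, (φ (q, 1)).2 = 1) ∧ (∀ h : H, (φ (1, h)).1 = 1) := by
  have cardQ : Fintype.card (QuaternionGroup 2) = 8 := by
    rw [QuaternionGroup.card]
  have hcop : Nat.Coprime 8 (Fintype.card H) := by
    have h2 : ¬ (2 ∣ Fintype.card H) := by
      rw [Nat.odd_iff] at hodd
      omega
    have h28 : Nat.Coprime 2 (Fintype.card H) := (Nat.prime_two.coprime_iff_not_dvd).mpr h2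
    have := Nat.Coprime.pow_left 3 h28
    norm_num at this
    exact this
  constructor
  · intro q
    have he1 : orderOf ((q, (1 : H)) : QuaternionGroup 2 × H) = orderOf q :=
      orderOf_injective (MonoidHom.inl (QuaternionGroup 2) H)
        (fun a b hab => by simpa using congrArg Prod.fst hab) q
    have h1 : orderOf ((q, (1 : H)) : QuaternionGroup 2 × H) ∣ 8 := by
      rw [he1, ← cardQ]; exact orderOf_dvd_card
    have h2 : orderOf (φ (q, 1)) ∣ 8 := by
      have he2 := orderOf_injective φ.toMonoidHom φ.injective (q, 1)
      simp only [MulEquiv.coe_toMonoidHom] at he2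
      rw [he2]; exact h1
    have h3 : orderOf ((φ (q, 1)).2) ∣ 8 :=
      (orderOf_map_dvd (MonoidHom.snd (QuaternionGroup 2) H) _).trans h2
    have h4 : orderOf ((φ (q, 1)).2) ∣ Fintype.card H := orderOf_dvd_card
    have h5 := Nat.dvd_gcd h3 h4
    rw [Nat.Coprime.gcd_eq_one hcop] at h5
    exact orderOf_eq_one_iff.mp (Nat.eq_one_of_dvd_one h5)
  · intro h
    have he1 : orderOf (((1 : QuaternionGroup 2), h) : QuaternionGroup 2 × H) = orderOf h :=
      orderOf_injective (MonoidHom.inr (QuaternionGroup 2) H)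
        (fun a b hab => by simpa using congrArg Prod.snd hab) h
    have h1 : orderOf (((1 : QuaternionGroup 2), h) : QuaternionGroup 2 × H) ∣
        Fintype.card H := by
      rw [he1]; exact orderOf_dvd_card
    have h2 : orderOf (φ (1, h)) ∣ Fintype.card H := by
      have he2 := orderOf_injective φ.toMonoidHom φ.injective (1, h)
      simp only [MulEquiv.coe_toMonoidHom] at he2
      rw [he2]; exact h1
    have h3 : orderOf ((φ (1, h)).1) ∣ Fintype.card H :=
      (orderOf_map_dvd (MonoidHom.fst (QuaternionGroup 2) H) _).trans h2
    have h4 : orderOf ((φ (1, h)).1) ∣ 8 := by rw [← cardQ]; exact orderOf_dvd_card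
    have h5 := Nat.dvd_gcd h4 h3
    rw [Nat.Coprime.gcd_eq_one hcop] at h5
    exact orderOf_eq_one_iff.mp (Nat.eq_one_of_dvd_one h5)

/-- Let `Q₈` be the quaternion group of order `8` (with `i = a 1` and
`j = xa 0`), let `H` be a nontrivial finite group of odd order, and let `S₁ ⊆ H` be such
that `Cay(H,S₁)` is a DRR of `H`. With `S = S₁ ∪ {i} ∪ jH ⊆ Q₈ × H`, we have
`Aut(G,S) = 1` but `Cay(Q₈ × H, S)` is not a DRR; that is, it witnesses that `Q₈ × H`
is not DRR-detecting. -/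
theorem Q8_witness_not_DRRDetecting {H : Type*} [Group H] [Fintype H] [Nontrivial H]
    (hodd : Odd (Fintype.card H))
    (S₁ : Set H) (hS₁ : IsDRR H (cayAdj S₁)) :
    AutGSTrivial
      ((fun h : H => ((1 : QuaternionGroup 2), h)) '' S₁ ∪
        {((QuaternionGroup.a 1 : QuaternionGroup 2), (1 : H))} ∪
        {p : QuaternionGroup 2 × H | p.1 = QuaternionGroup.xa 0}) ∧
    ¬ IsDRR (QuaternionGroup 2 × H)
      (cayAdj
        ((fun h : H => ((1 : QuaternionGroup 2), h)) '' S₁ ∪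
          {((QuaternionGroup.a 1 : QuaternionGroup 2), (1 : H))} ∪
          {p : QuaternionGroup 2 × H | p.1 = QuaternionGroup.xa 0})) := by
  show AutGSTrivial (bigS S₁) ∧ ¬ IsDRR (QuaternionGroup 2 × H) (cayAdj (bigS S₁))
  constructor
  · -- Aut(G,S) is trivial
    intro φ hφ
    obtain ⟨hsnd, hfst⟩ := aut_prod_decomp hodd φ
    set Fq : QuaternionGroup 2 →* QuaternionGroup 2 :=
      (MonoidHom.fst _ _).comp (φ.toMonoidHom.comp (MonoidHom.inl _ _)) with hFqdef
    set Fh : H →* H :=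
      (MonoidHom.snd _ _).comp (φ.toMonoidHom.comp (MonoidHom.inr _ _)) with hFhdef
    have hFq : ∀ q, Fq q = (φ (q, 1)).1 := fun q => rfl
    have hFh : ∀ h, Fh h = (φ (1, h)).2 := fun h => rfl
    have hprod : ∀ (q : QuaternionGroup 2) (h : H), φ (q, h) = (Fq q, Fh h) := by
      intro q h
      have hq : ((q, h) : QuaternionGroup 2 × H) = (q, 1) * (1, h) := by
        simp [Prod.mk_mul_mk]
      rw [hq, map_mul]
      refine Prod.ext ?_ ?_
      · show (φ (q, 1)).1 * (φ (1, h)).1 = Fq q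
        rw [hfst h, mul_one, hFq]
      · show (φ (q, 1)).2 * (φ (1, h)).2 = Fh h
        rw [hsnd q, one_mul, hFh]
    have hFq_inj : Function.Injective Fq := by
      intro x y hxy
      have : φ (x, 1) = φ (y, 1) := by
        refine Prod.ext ?_ ?_
        · rw [← hFq, ← hFq]; exact hxy
        · rw [hsnd, hsnd]
      have := φ.injective this
      exact (Prod.ext_iff.mp this).1
    have hFh_inj : Function.Injective Fh := by
      intro x y hxy
      have : φ (1, x) = φ (1, y) := by
        refine Prod.ext ?_ ?_
        · rw [hfst, hfst]
        · rw [← hFh, ← hFh]; exact hxy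
      have := φ.injective this
      exact (Prod.ext_iff.mp this).2
    obtain ⟨h₀, hh₀⟩ := exists_ne (1 : H)
    have hmem : ∀ p ∈ bigS S₁, φ p ∈ bigS S₁ := fun p hp => by
      rw [← hφ]; exact Set.mem_image_of_mem _ hp
    -- φ fixes j = xa 0
    have hx : Fq (xa 0) = xa 0 := by
      have h1 := hmem (xa 0, h₀) (mem_bigS.mpr (Or.inr (Or.inr rfl)))
      rw [hprod, mem_bigS] at h1
      rcases h1 with ⟨hq1, -⟩ | hab | h
      · exfalso
        have : (xa 0 : QuaternionGroup 2) = 1 := hFq_inj (hq1.trans (map_one Fq).symm)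
        rw [one_def] at this
        cases this
      · exfalso
        have : Fh h₀ = 1 := (Prod.ext_iff.mp hab).2
        exact hh₀ (hFh_inj (this.trans (map_one Fh).symm))
      · exact h
    -- φ fixes i = a 1
    have hi : Fq (a 1) = a 1 := by
      have h1 := hmem (a 1, 1) (mem_bigS.mpr (Or.inr (Or.inl rfl)))
      rw [hprod, mem_bigS] at h1
      rcases h1 with ⟨hq1, -⟩ | hab | h
      · exfalso
        have : (a 1 : QuaternionGroup 2) = 1 := hFq_inj (hq1.trans (map_one Fq).symm)
        rw [one_def] at this
        simp only [QuaternionGroup.a.injEq] at this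
        exact absurd this (by decide)
      · exact (Prod.ext_iff.mp hab).1
      · exfalso
        have : (a 1 : QuaternionGroup 2) = xa 0 := hFq_inj (h.trans hx.symm)
        simp at this
    -- Fh preserves S₁
    have hsub : Fh '' S₁ ⊆ S₁ := by
      rintro - ⟨s, hs, rfl⟩
      have h1 := hmem (1, s) (mem_bigS.mpr (Or.inl ⟨rfl, hs⟩))
      rw [hprod, mem_bigS] at h1
      rcases h1 with ⟨-, h2⟩ | hab | h
      · exact h2
      · exfalso
        have : Fq 1 = a 1 := (Prod.ext_iff.mp hab).1
        rw [map_one] at this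
        rw [one_def] at this
        simp only [QuaternionGroup.a.injEq] at this
        exact absurd this (by decide)
      · exfalso
        have : Fq 1 = xa 0 := h
        rw [map_one, one_def] at this
        cases this
    have hSeq : Fh '' S₁ = S₁ :=
      Set.eq_of_subset_of_ncard_le hsub
        (by rw [Set.ncard_image_of_injective S₁ hFh_inj]) S₁.toFinite
    -- Fh is the identity, using that Cay(H,S₁) is a DRR
    have hFh_id : ∀ h : H, Fh h = h := by
      have hbij : Function.Bijective Fh := Finite.injective_iff_bijective.mp hFh_inj
      set σ : Equiv.Perm H := Equiv.ofBijective Fh hbij with hσdef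
      have hmemσ : σ ∈ digraphAut (cayAdj S₁) := by
        have key : ∀ x y, cayAdj S₁ (σ x) (σ y) ↔ cayAdj S₁ x y := by
          intro x y
          constructor
          · rintro ⟨s, hs, he⟩
            rw [← hSeq] at hs
            obtain ⟨s', hs', rfl⟩ := hs
            refine ⟨s', hs', hbij.1 ?_⟩
            rw [map_mul]
            exact he
          · rintro ⟨s, hs, rfl⟩
            refine ⟨Fh s, hsub ⟨s, hs, rfl⟩, ?_⟩
            show Fh (s * x) = Fh s * Fh x
            exact map_mul Fh s x
        exact key
      obtain ⟨τ, -, huniq⟩ := hS₁.2 1 1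
      have h1 : (⟨σ, hmemσ⟩ : digraphAut (cayAdj S₁)) = τ := by
        refine huniq _ ?_
        show Fh 1 = 1
        exact map_one Fh
      have h2 : (1 : digraphAut (cayAdj S₁)) = τ := huniq 1 rfl
      have h3 : σ = (1 : Equiv.Perm H) :=
        congrArg (fun t : digraphAut (cayAdj S₁) => (t : Equiv.Perm H)) (h1.trans h2.symm)
      intro h
      have h4 := congrArg (fun e : Equiv.Perm H => e h) h3
      simpa [hσdef] using h4
    -- Fq is the identity
    have ha : ∀ m : ZMod (2 * 2), Fq (a m) = a m := by
      intro m
      have hm : (a m : QuaternionGroup 2) = (a 1) ^ (m.val) := by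
        rw [a_one_pow]
        congr 1
        exact (ZMod.natCast_rightInverse m).symm
      rw [hm, map_pow, hi]
    have hFq_id : ∀ q : QuaternionGroup 2, Fq q = q := by
      intro q
      cases q with
      | a m => exact ha m
      | xa m =>
        have hm : (xa m : QuaternionGroup 2) = xa 0 * a m := by
          rw [xa_mul_a, zero_add]
        rw [hm, map_mul, hx, ha]
    refine DFunLike.ext _ _ fun p => ?_
    obtain ⟨q, h⟩ := p
    show φ (q, h) = (q, h)
    rw [hprod, hFq_id, hFh_id]
  · -- not a DRR
    rintro ⟨-, hreg⟩
    obtain ⟨h₀, hh₀⟩ := exists_ne (1 : H)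
    obtain ⟨τ, -, huniq⟩ := hreg 1 1
    have hfix : (twistPerm h₀) (1 : QuaternionGroup 2 × H) = 1 := by
      show ((1 : QuaternionGroup 2), (1 : H) * twist h₀ (1 : QuaternionGroup 2)) = 1
      rw [one_def]
      show (a 0, (1 : H) * 1) = (1, 1)
      rw [mul_one, ← one_def]
    have h1 : (⟨twistPerm h₀, twistPerm_mem h₀ S₁⟩ :
        digraphAut (cayAdj (bigS S₁))) = τ := huniq _ hfix
    have h2 : (1 : digraphAut (cayAdj (bigS S₁))) = τ := huniq 1 rfl
    have h3 : twistPerm h₀ = (1 : Equiv.Perm (QuaternionGroup 2 × H)) :=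
      congrArg (fun t : digraphAut (cayAdj (bigS S₁)) =>
        (t : Equiv.Perm (QuaternionGroup 2 × H))) (h1.trans h2.symm)
    have h4 := congrArg (fun e : Equiv.Perm (QuaternionGroup 2 × H) =>
      (e (xa 0, (1 : H))).2) h3
    exact hh₀ (by simpa [twistPerm, twist] using h4)
end
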